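/- arXiv:1207.2958 — 6 statements merged into one kernel-verified Lean document; each statement's English description precedes it below -/
import Mathlib

section
/- Let X be a normed space, x, y ∈ X, δ > 0, u = (x+y)/2 and v = (x−y)/2. Then for 1 ≤ p < ∞ in ℓ_p: there exists N ∈ ℕ such that u + δ^{1/p}‖v‖ B_{E_N} ⊆ Mid(x, y, δ), where E_N is the closed linear span of the basis vectors e_i with i > N. -/
open scoped ENNReal
open Filter Real Topology

/-- The approximate metric midpoint set. -/
def Mid {X : Type*} [MetricSpace X] (x y : X) (δ : ℝ) : Set X :=
  {z : X | max (dist x z) (dist y z) ≤ (1 + δ) * dist x y / 2}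

/-- In `ℓ_p` (`1 ≤ p < ∞`), with `u = (x+y)/2` and `v = (x-y)/2`, there is `N` such
that `u + δ^{1/p} ‖v‖ B_{E_N} ⊆ Mid (x, y, δ)`, where `E_N` is the closed span of the
basis vectors `e_i` with `i > N`, i.e. `B_{E_N}` consists of elements of the unit ball
vanishing on coordinates `≤ N`. -/
theorem midpoints_lower_estimate_lp (p : ℝ≥0∞) [Fact (1 ≤ p)] (hp : p ≠ ∞)
    (x y : lp (fun _ : ℕ => ℝ) p) (δ : ℝ) (hδ : 0 < δ) :
    ∃ N : ℕ, ∀ w : lp (fun _ : ℕ => ℝ) p, ‖w‖ ≤ 1 → (∀ i ≤ N, w i = 0) →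
      ((2 : ℝ)⁻¹ • (x + y)) + (δ ^ (1 / p.toReal) * ‖(2 : ℝ)⁻¹ • (x - y)‖) • w
        ∈ Mid x y δ := by
  have hq1 : 1 ≤ p.toReal := by
    rw [← ENNReal.toReal_one]
    exact ENNReal.toReal_mono hp Fact.out
  set q := p.toReal with hqdef
  have hq0 : (0 : ℝ) < q := lt_of_lt_of_le one_pos hq1
  set v : lp (fun _ : ℕ => ℝ) p := (2 : ℝ)⁻¹ • (x - y) with hv
  set u : lp (fun _ : ℕ => ℝ) p := (2 : ℝ)⁻¹ • (x + y) with hu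
  set c : ℝ := δ ^ (1 / q) * ‖v‖ with hc
  have hc0 : 0 ≤ c := mul_nonneg (Real.rpow_nonneg hδ.le _) (norm_nonneg _)
  have hv_sum : Summable (fun i => ‖(v : ∀ _ : ℕ, ℝ) i‖ ^ q) :=
    (memℓp_gen_iff hq0).1 (lp.memℓp v)
  set T : ℕ → ℝ := fun N => ∑' k, ‖(v : ∀ _ : ℕ, ℝ) (k + (N + 1))‖ ^ q with hT
  have hTnn : ∀ N, 0 ≤ T N := fun N => tsum_nonneg (fun k => by positivity)
  have hTsplit : ∀ N, ∑ i ∈ Finset.range (N + 1), ‖(v : ∀ _ : ℕ, ℝ) i‖ ^ q + T N = ‖v‖ ^ q := by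
    intro N
    rw [lp.norm_rpow_eq_tsum hq0]
    exact Summable.sum_add_tsum_nat_add (N + 1) hv_sum
  -- choice of N
  have key : ∃ N, (T N ^ (1 / q) + c) ^ q ≤ ((1 + δ) ^ q - 1) * ‖v‖ ^ q + T N := by
    rcases eq_or_lt_of_le hq1 with hq | hq
    · refine ⟨0, ?_⟩
      rw [hc, ← hq]
      simp only [one_div, inv_one, Real.rpow_one]
      linarith
    · by_cases hv0 : ‖v‖ = 0
      · refine ⟨0, ?_⟩
        have hvz : v = 0 := norm_eq_zero.1 hv0
        have hT0 : T 0 = 0 := by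
          simp [hT, hvz, Real.zero_rpow hq0.ne']
        rw [hT0, hc, hv0, mul_zero]
        simp [Real.zero_rpow (one_div_ne_zero hq0.ne'), Real.zero_rpow hq0.ne', Real.zero_rpow (inv_ne_zero hq0.ne')]
      · have hvpos : 0 < ‖v‖ := (norm_nonneg v).lt_of_ne' hv0
        have hcpos : 0 < c := mul_pos (Real.rpow_pos_of_pos hδ _) hvpos
        have hcq : c ^ q = δ * ‖v‖ ^ q := by
          rw [hc, Real.mul_rpow (Real.rpow_nonneg hδ.le _) (norm_nonneg _), one_div,
            Real.rpow_inv_rpow hδ.le hq0.ne']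
        have hR : c ^ q < ((1 + δ) ^ q - 1) * ‖v‖ ^ q := by
          rw [hcq]
          have h2 : (1 + δ : ℝ) ^ (1 : ℝ) < (1 + δ) ^ q :=
            (Real.rpow_lt_rpow_left_iff (by linarith)).2 hq
          rw [Real.rpow_one] at h2
          have hvq : 0 < ‖v‖ ^ q := Real.rpow_pos_of_pos hvpos q
          nlinarith
        have hTt : Tendsto T atTop (𝓝 0) := by
          have h := tendsto_sum_nat_add (fun i => ‖(v : ∀ _ : ℕ, ℝ) i‖ ^ q)
          exact h.comp (tendsto_add_atTop_nat 1)
        have hgc : Tendsto (fun N => (T N ^ (1 / q) + c) ^ q - T N) atTop (𝓝 (c ^ q)) := by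
          have hA : ContinuousAt (fun t : ℝ => t ^ ((1 : ℝ)/q)) 0 :=
            Real.continuousAt_rpow_const 0 (1/q) (Or.inr (by positivity))
          have h1 : ContinuousAt (fun t : ℝ => (t ^ ((1 : ℝ)/q) + c) ^ q) 0 :=
            (hA.add continuousAt_const).rpow_const (Or.inr hq0.le)
          have h2 := (h1.tendsto.comp hTt).sub hTt
          simpa [Real.zero_rpow (show (1 : ℝ)/q ≠ 0 by positivity), Real.zero_rpow (inv_ne_zero hq0.ne')] using h2
        obtain ⟨N, hNlt⟩ := (hgc.eventually_lt_const hR).exists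
        exact ⟨N, by linarith⟩
  obtain ⟨N, hN⟩ := key
  -- the main norm estimate
  have main : ∀ w' : lp (fun _ : ℕ => ℝ) p, ‖w'‖ ≤ 1 → (∀ i ≤ N, w' i = 0) →
      ‖v + c • w'‖ ≤ (1 + δ) * ‖v‖ := by
    intro w' hw1 hw0
    have hb_mem : Memℓp (fun i => if i ≤ N then 0 else (v : ∀ _ : ℕ, ℝ) i) p := by
      apply memℓp_gen
      apply Summable.of_nonneg_of_le (fun i => by positivity) (fun i => ?_) hv_sum
      by_cases h : i ≤ N
      · simp only [h, if_true, norm_zero, ← hqdef, Real.zero_rpow hq0.ne']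
        positivity
      · simp [h, ← hqdef]
    set b : lp (fun _ : ℕ => ℝ) p := ⟨_, hb_mem⟩ with hb
    have hb_coe : ∀ i, (b : ∀ _ : ℕ, ℝ) i = if i ≤ N then 0 else (v : ∀ _ : ℕ, ℝ) i :=
      fun i => rfl
    have hb_sum : Summable (fun i => ‖(b : ∀ _ : ℕ, ℝ) i‖ ^ q) :=
      (memℓp_gen_iff hq0).1 (lp.memℓp b)
    have hbnorm : ‖b‖ ^ q = T N := by
      rw [lp.norm_rpow_eq_tsum hq0, ← Summable.sum_add_tsum_nat_add (N + 1) hb_sum]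
      have h1 : ∑ i ∈ Finset.range (N + 1), ‖(b : ∀ _ : ℕ, ℝ) i‖ ^ q = 0 := by
        refine Finset.sum_eq_zero fun i hi => ?_
        rw [hb_coe i, if_pos (Nat.lt_succ_iff.1 (Finset.mem_range.1 hi)), norm_zero,
          Real.zero_rpow hq0.ne']
      rw [h1, zero_add]
      refine tsum_congr fun k => ?_
      rw [hb_coe, if_neg (by omega)]
    have hbn : ‖b‖ = T N ^ (1 / q) := by
      rw [← hbnorm, one_div, Real.rpow_rpow_inv (norm_nonneg _) hq0.ne']
    have hcoord : ∀ i, ((v + c • w' : lp (fun _ : ℕ => ℝ) p) : ∀ _ : ℕ, ℝ) i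
        = (v : ∀ _ : ℕ, ℝ) i + c * (w' : ∀ _ : ℕ, ℝ) i := by
      intro i
      simp [lp.coeFn_add, lp.coeFn_smul]; rfl
    have hcoordb : ∀ i, ((b + c • w' : lp (fun _ : ℕ => ℝ) p) : ∀ _ : ℕ, ℝ) i
        = (b : ∀ _ : ℕ, ℝ) i + c * (w' : ∀ _ : ℕ, ℝ) i := by
      intro i
      simp [lp.coeFn_add, lp.coeFn_smul]; rfl
    have hsum1 : Summable
        (fun i => ‖((v + c • w' : lp (fun _ : ℕ => ℝ) p) : ∀ _ : ℕ, ℝ) i‖ ^ q) :=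
      (memℓp_gen_iff hq0).1 (lp.memℓp _)
    have hsum2 : Summable
        (fun i => ‖((b + c • w' : lp (fun _ : ℕ => ℝ) p) : ∀ _ : ℕ, ℝ) i‖ ^ q) :=
      (memℓp_gen_iff hq0).1 (lp.memℓp _)
    have hsplit : ‖v + c • w'‖ ^ q = (‖v‖ ^ q - T N) + ‖b + c • w'‖ ^ q := by
      rw [lp.norm_rpow_eq_tsum hq0 (v + c • w'), ← Summable.sum_add_tsum_nat_add (N + 1) hsum1,
        lp.norm_rpow_eq_tsum hq0 (b + c • w'), ← Summable.sum_add_tsum_nat_add (N + 1) hsum2]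
      have hhead1 : ∑ i ∈ Finset.range (N + 1),
            ‖((v + c • w' : lp (fun _ : ℕ => ℝ) p) : ∀ _ : ℕ, ℝ) i‖ ^ q
          = ∑ i ∈ Finset.range (N + 1), ‖(v : ∀ _ : ℕ, ℝ) i‖ ^ q := by
        refine Finset.sum_congr rfl fun i hi => ?_
        rw [hcoord i, hw0 i (Nat.lt_succ_iff.1 (Finset.mem_range.1 hi)), mul_zero, add_zero]
      have hhead2 : ∑ i ∈ Finset.range (N + 1),
          ‖((b + c • w' : lp (fun _ : ℕ => ℝ) p) : ∀ _ : ℕ, ℝ) i‖ ^ q = 0 := by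
        refine Finset.sum_eq_zero fun i hi => ?_
        rw [hcoordb i, hb_coe i, if_pos (Nat.lt_succ_iff.1 (Finset.mem_range.1 hi)),
          hw0 i (Nat.lt_succ_iff.1 (Finset.mem_range.1 hi)), mul_zero, add_zero, norm_zero,
          Real.zero_rpow hq0.ne']
      have htails : (∑' k : ℕ, ‖((v + c • w' : lp (fun _ : ℕ => ℝ) p) : ∀ _ : ℕ, ℝ)
            (k + (N + 1))‖ ^ q)
          = ∑' k : ℕ, ‖((b + c • w' : lp (fun _ : ℕ => ℝ) p) : ∀ _ : ℕ, ℝ) (k + (N + 1))‖ ^ q := by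
        refine tsum_congr fun k => ?_
        rw [hcoord, hcoordb, hb_coe, if_neg (by omega)]
      rw [hhead1, hhead2, zero_add, htails]
      have := hTsplit N
      linarith
    have htail : ‖b + c • w'‖ ^ q ≤ ((1 + δ) ^ q - 1) * ‖v‖ ^ q + T N := by
      refine le_trans (Real.rpow_le_rpow (norm_nonneg _) ?_ hq0.le) hN
      calc ‖b + c • w'‖ ≤ ‖b‖ + ‖c • w'‖ := norm_add_le _ _
        _ ≤ T N ^ (1 / q) + c := by
            rw [hbn, norm_smul, Real.norm_eq_abs, abs_of_nonneg hc0]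
            have : c * ‖w'‖ ≤ c * 1 := mul_le_mul_of_nonneg_left hw1 hc0
            linarith
    have hfin : ‖v + c • w'‖ ^ q ≤ ((1 + δ) * ‖v‖) ^ q := by
      rw [hsplit, Real.mul_rpow (by linarith) (norm_nonneg _)]
      linarith
    exact (Real.rpow_le_rpow_iff (norm_nonneg _)
      (mul_nonneg (by linarith) (norm_nonneg _)) hq0).1 hfin
  refine ⟨N, fun w hw1 hw0 => ?_⟩
  have h1 : ‖v + c • (-w)‖ ≤ (1 + δ) * ‖v‖ := by
    refine main (-w) (by rw [norm_neg]; exact hw1) (fun i hi => ?_)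
    have hni : ((-w : lp (fun _ : ℕ => ℝ) p) : ∀ _ : ℕ, ℝ) i = -(w i) := by
      rw [lp.coeFn_neg]; rfl
    rw [hni, hw0 i hi, neg_zero]
  have h2 : ‖v + c • w‖ ≤ (1 + δ) * ‖v‖ := main w hw1 hw0
  have hxz : x - (u + c • w) = v + c • (-w) := by rw [hu, hv]; module
  have hyz : y - (u + c • w) = -(v + c • w) := by rw [hu, hv]; module
  have hxy : x - y = (2 : ℝ) • v := by rw [hv]; module
  have hdxy : dist x y = 2 * ‖v‖ := by
    rw [dist_eq_norm, hxy, norm_smul]; simp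
  show max (dist x (u + c • w)) (dist y (u + c • w)) ≤ (1 + δ) * dist x y / 2
  rw [dist_eq_norm, dist_eq_norm, hxz, hyz, norm_neg, hdxy]
  have he : (1 + δ) * (2 * ‖v‖) / 2 = (1 + δ) * ‖v‖ := by ring
  rw [he]
  exact max_le h1 h2
end

section
/- In ℓ_p (1 ≤ p < ∞), for any x, y and 0 < δ < 1, there is a compact subset K of ℓ_p such that Mid(x, y, δ) ⊆ K + 2 δ^{1/p} ‖v‖ B_{ℓ_p}, where v = (x−y)/2. -/
open scoped ENNReal Pointwise

lemma half_rpow_mean {q : ℝ} (hq : 1 ≤ q) {c d : ℝ} (hc : 0 ≤ c) (hd : 0 ≤ d) :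
    ((c + d) / 2) ^ q ≤ (c ^ q + d ^ q) / 2 := by
  have h := Real.rpow_arith_mean_le_arith_mean_rpow (Finset.univ : Finset (Fin 2))
    ![1/2, 1/2] ![c, d] (by intro i _; fin_cases i <;> norm_num)
    (by simp [Fin.sum_univ_succ]; norm_num) (by intro i _; fin_cases i <;> simpa) hq
  simp [Fin.sum_univ_succ] at h
  calc ((c + d) / 2) ^ q = (1/2 * c + 1/2 * d) ^ q := by ring_nf
    _ ≤ 1/2 * c ^ q + 1/2 * d ^ q := by convert h using 2 <;> ring
    _ = (c ^ q + d ^ q) / 2 := by ring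

lemma abs_add_abs_sub' (a b : ℝ) : |a + b| + |a - b| = 2 * max |a| |b| := by
  rcases le_total 0 a with ha | ha <;> rcases le_total 0 b with hb | hb <;>
    rcases le_total 0 (a + b) with hab | hab <;> rcases le_total 0 (a - b) with hab' | hab' <;>
    simp [abs_of_nonneg, abs_of_nonpos, max_def, *] <;> split <;> linarith

lemma max_abs_rpow {q : ℝ} (hq : 1 ≤ q) (a b : ℝ) :
    (max |a| |b|) ^ q ≤ (|a + b| ^ q + |a - b| ^ q) / 2 := by
  have h := half_rpow_mean hq (abs_nonneg (a + b)) (abs_nonneg (a - b))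
  have h2 : (|a + b| + |a - b|) / 2 = max |a| |b| := by
    rw [abs_add_abs_sub']; ring
  rwa [h2] at h

lemma one_add_rpow_le {q δ : ℝ} (hq : 1 ≤ q) (h0 : 0 ≤ δ) (h1 : δ ≤ 1) :
    (1 + δ) ^ q ≤ 1 + ((2:ℝ) ^ q - 1) * δ := by
  have h := Real.rpow_arith_mean_le_arith_mean_rpow (Finset.univ : Finset (Fin 2))
    ![1 - δ, δ] ![1, 2] (by intro i _; fin_cases i <;> simp <;> linarith)
    (by simp [Fin.sum_univ_succ]) (by intro i _; fin_cases i <;> norm_num) hq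
  simp [Fin.sum_univ_succ, Real.one_rpow] at h
  calc (1 + δ) ^ q = ((1 - δ) * 1 + δ * 2) ^ q := by ring_nf
    _ ≤ (1 - δ) * 1 + δ * 2 ^ q := by convert h using 2 <;> ring
    _ = 1 + ((2:ℝ) ^ q - 1) * δ := by ring


set_option maxHeartbeats 1000000 in
/-- In `ℓ_p` (`1 ≤ p < ∞`), for any `x, y` and `0 < δ < 1`, there is a compact set `K`
with `Mid (x, y, δ) ⊆ K + 2 δ^{1/p} ‖v‖ B_{ℓ_p}`, where `v = (x - y)/2`. -/
theorem midpoints_upper_estimate_lp (p : ℝ≥0∞) [Fact (1 ≤ p)] (hp : p ≠ ∞)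
    (x y : lp (fun _ : ℕ => ℝ) p) (δ : ℝ) (hδ₀ : 0 < δ) (hδ₁ : δ < 1) :
    ∃ K : Set (lp (fun _ : ℕ => ℝ) p), IsCompact K ∧
      Mid x y δ ⊆ K + Metric.closedBall (0 : lp (fun _ : ℕ => ℝ) p) (2 * δ ^ (1 / p.toReal) * ‖(2 : ℝ)⁻¹ • (x - y)‖) := by
  set q : ℝ := p.toReal with hqdef
  have hp1 : (1 : ℝ≥0∞) ≤ p := Fact.out
  have hq1 : 1 ≤ q := by
    have := ENNReal.toReal_mono hp hp1
    simpa using this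
  have hq0 : 0 < q := lt_of_lt_of_le one_pos hq1
  -- v = (x - y)/2
  set v : lp (fun _ : ℕ => ℝ) p := (2 : ℝ)⁻¹ • (x - y) with hvdef
  have h2v : (2 : ℝ) • v = x - y := by
    rw [hvdef, smul_smul]; norm_num
  have hxy2 : dist x y = 2 * ‖v‖ := by
    rw [dist_eq_norm, ← h2v, norm_smul]
    simp
  rcases eq_or_ne x y with rfl | hxy
  · -- trivial case x = y
    refine ⟨{x}, isCompact_singleton, ?_⟩
    intro z hz
    have hz' : dist x z ≤ 0 := by
      have := hz
      simp only [Mid, Set.mem_setOf_eq, dist_self] at this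
      have h := le_trans (le_max_left _ _) this
      linarith
    have hzx : z = x := by
      have := dist_le_zero.mp hz'
      exact this.symm
    rw [Set.mem_add]
    refine ⟨x, rfl, 0, ?_, by rw [hzx, add_zero]⟩
    simp [Metric.mem_closedBall]
    positivity
  -- main case
  have hvne : v ≠ 0 := by
    intro h
    apply hxy
    have : x - y = 0 := by rw [← h2v, h, smul_zero]
    exact sub_eq_zero.mp this
  have hvpos : 0 < ‖v‖ := norm_pos_iff.mpr hvne
  -- choose finset F with ∑_{i∈F} |v i|^q ≥ (1-δ)‖v‖^q
  have hvsum : HasSum (fun i => ‖v i‖ ^ q) (‖v‖ ^ q) := lp.hasSum_norm hq0 v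
  have hεpos : 0 < δ * ‖v‖ ^ q := by positivity
  obtain ⟨n, hF⟩ : ∃ n : ℕ, ‖v‖ ^ q - δ * ‖v‖ ^ q < ∑ i ∈ Finset.range n, ‖v i‖ ^ q := by
    have := hvsum.tendsto_sum_nat.eventually (eventually_gt_nhds (by linarith : ‖v‖ ^ q - δ * ‖v‖ ^ q < ‖v‖ ^ q))
    exact this.exists
  set F : Finset ℕ := Finset.range n with hFdef
  -- the compact set
  set m : lp (fun _ : ℕ => ℝ) p := x - v with hmdef
  classical
  set φ : ({i // i ∈ F} → ℝ) → lp (fun _ : ℕ => ℝ) p :=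
    fun c => m + ∑ i ∈ F.attach, c i • lp.single p (i : ℕ) (1 : ℝ) with hφdef
  have hφcont : Continuous φ := by
    apply Continuous.add continuous_const
    exact continuous_finset_sum _ fun i _ => (continuous_apply i).smul continuous_const
  refine ⟨φ '' Metric.closedBall 0 (3 * ‖v‖),
    (isCompact_closedBall _ _).image hφcont, ?_⟩
  intro z hz
  -- basic estimates
  have hxz : ‖x - z‖ ≤ (1 + δ) * ‖v‖ := by
    have h := le_trans (le_max_left (dist x z) (dist y z)) hz
    rw [hxy2] at h
    rw [← dist_eq_norm]
    linarith
  have hyz : ‖z - y‖ ≤ (1 + δ) * ‖v‖ := by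
    have h := le_trans (le_max_right (dist x z) (dist y z)) hz
    rw [hxy2] at h
    rw [← dist_eq_norm, dist_comm]
    linarith
  set u : lp (fun _ : ℕ => ℝ) p := z - m with hudef
  have huvx : v - u = x - z := by rw [hudef, hmdef]; abel
  have huvy : v + u = z - y := by
    have : v + u = z - x + (2 : ℝ) • v := by rw [hudef, hmdef, h2v]; module
    rw [this, h2v]; abel
  have hu3 : ‖u‖ ≤ 3 * ‖v‖ := by
    have : u = -(v - u) + v := by abel
    rw [this]
    calc ‖-(v - u) + v‖ ≤ ‖-(v - u)‖ + ‖v‖ := norm_add_le _ _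
      _ = ‖x - z‖ + ‖v‖ := by rw [norm_neg, huvx]
      _ ≤ (1 + δ) * ‖v‖ + ‖v‖ := by linarith
      _ ≤ 3 * ‖v‖ := by nlinarith
  -- summability / tsum estimates
  have hsum1 : HasSum (fun i => ‖(v - u) i‖ ^ q) (‖v - u‖ ^ q) := lp.hasSum_norm hq0 _
  have hsum2 : HasSum (fun i => ‖(v + u) i‖ ^ q) (‖v + u‖ ^ q) := lp.hasSum_norm hq0 _
  set g : ℕ → ℝ := fun i => (max |v i| |u i|) ^ q with hgdef
  have hg0 : ∀ i, 0 ≤ g i := fun i => Real.rpow_nonneg (le_trans (abs_nonneg _) (le_max_left _ _)) _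
  set f : ℕ → ℝ := fun i => (‖(v + u) i‖ ^ q + ‖(v - u) i‖ ^ q) / 2 with hfdef
  have hgf : ∀ i, g i ≤ f i := by
    intro i
    have h := max_abs_rpow hq1 (v i) (u i)
    have h1 : (v + u) i = v i + u i := by
      rw [lp.coeFn_add]; rfl
    have h2 : (v - u) i = v i - u i := by
      rw [lp.coeFn_sub]; rfl
    simpa [hfdef, hgdef, h1, h2, Real.norm_eq_abs] using h
  have hfsum : HasSum f ((‖v + u‖ ^ q + ‖v - u‖ ^ q) / 2) := by
    exact (hsum2.add hsum1).div_const 2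
  have hgsummable : Summable g := Summable.of_nonneg_of_le hg0 hgf hfsum.summable
  have htsumf : (‖v + u‖ ^ q + ‖v - u‖ ^ q) / 2 ≤ ((1 + δ) * ‖v‖) ^ q := by
    have ha : ‖v + u‖ ^ q ≤ ((1 + δ) * ‖v‖) ^ q := by
      apply Real.rpow_le_rpow (norm_nonneg _) _ hq0.le
      rw [huvy]; exact hyz
    have hb : ‖v - u‖ ^ q ≤ ((1 + δ) * ‖v‖) ^ q := by
      apply Real.rpow_le_rpow (norm_nonneg _) _ hq0.le
      rw [huvx]; exact hxz
    linarith
  have htsumg : ∑' i, g i ≤ ((1 + δ) * ‖v‖) ^ q := by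
    have h := Summable.tsum_le_tsum hgf hgsummable hfsum.summable
    rw [hfsum.tsum_eq] at h
    exact h.trans htsumf
  -- tail estimate
  have husum : HasSum (fun i => ‖u i‖ ^ q) (‖u‖ ^ q) := lp.hasSum_norm hq0 u
  have htail : ‖u‖ ^ q - ∑ i ∈ F, ‖u i‖ ^ q ≤ ∑' i, g i - ∑ i ∈ F, g i := by
    have h1 : (∑' i : (F : Set ℕ), ‖u i‖ ^ q) + ∑' i : ↑((F : Set ℕ)ᶜ), ‖u i‖ ^ q = ‖u‖ ^ q := by
      rw [← husum.tsum_eq]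
      exact Summable.tsum_add_tsum_compl (husum.summable.subtype _) (husum.summable.subtype _)
    have h2 : (∑' i : (F : Set ℕ), g i) + ∑' i : ↑((F : Set ℕ)ᶜ), g i = ∑' i, g i :=
      Summable.tsum_add_tsum_compl (hgsummable.subtype _) (hgsummable.subtype _)
    have h3 : ∑' i : ↑((F : Set ℕ)ᶜ), ‖u i‖ ^ q ≤ ∑' i : ↑((F : Set ℕ)ᶜ), g i := by
      apply Summable.tsum_le_tsum _ (husum.summable.subtype _) (hgsummable.subtype _)
      intro i
      apply Real.rpow_le_rpow (norm_nonneg _) _ hq0.le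
      simp [Real.norm_eq_abs]
    have h4 : (∑' i : (F : Set ℕ), ‖u i‖ ^ q) = ∑ i ∈ F, ‖u i‖ ^ q :=
      Finset.tsum_subtype' F (fun i => ‖u i‖ ^ q)
    have h5 : (∑' i : (F : Set ℕ), g i) = ∑ i ∈ F, g i :=
      Finset.tsum_subtype' F g
    linarith
  have hFg : ∑ i ∈ F, ‖v i‖ ^ q ≤ ∑ i ∈ F, g i := by
    apply Finset.sum_le_sum
    intro i _
    apply Real.rpow_le_rpow (norm_nonneg _) _ hq0.le
    simp [Real.norm_eq_abs]
  -- norm of tail element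
  set T : lp (fun _ : ℕ => ℝ) p := ∑ i ∈ F, lp.single p i (u i) with hTdef
  have hwnorm : ‖u - T‖ ^ q = ‖u‖ ^ q - ∑ i ∈ F, ‖u i‖ ^ q :=
    lp.norm_compl_sum_single hq0 u F
  have hvq0 : (0:ℝ) ≤ ‖v‖ ^ q := Real.rpow_nonneg (norm_nonneg v) q
  have hkey : ‖u - T‖ ^ q ≤ (2 * δ ^ (1 / q) * ‖v‖) ^ q := by
    have e1 : ((1 + δ) * ‖v‖) ^ q = (1 + δ) ^ q * ‖v‖ ^ q :=
      Real.mul_rpow (by linarith) (norm_nonneg _)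
    have e2 : (1 + δ) ^ q ≤ 1 + ((2:ℝ) ^ q - 1) * δ := one_add_rpow_le hq1 hδ₀.le hδ₁.le
    have e3 : (2 * δ ^ (1 / q) * ‖v‖) ^ q = (2:ℝ) ^ q * δ * ‖v‖ ^ q := by
      rw [Real.mul_rpow (by positivity) (norm_nonneg _),
        Real.mul_rpow (by norm_num) (by positivity),
        ← Real.rpow_mul hδ₀.le, one_div_mul_cancel hq0.ne', Real.rpow_one]
    have e4 : (1 + δ) ^ q * ‖v‖ ^ q ≤ (1 + ((2:ℝ) ^ q - 1) * δ) * ‖v‖ ^ q :=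
      mul_le_mul_of_nonneg_right e2 hvq0
    rw [e3]
    rw [e1] at htsumg
    nlinarith [hF.le]
  have hwle : ‖u - T‖ ≤ 2 * δ ^ (1 / q) * ‖v‖ := by
    have hr : (0:ℝ) ≤ 2 * δ ^ (1 / q) * ‖v‖ := by positivity
    exact (Real.rpow_le_rpow_iff (norm_nonneg _) hr hq0).mp hkey
  -- assemble membership
  rw [Set.mem_add]
  refine ⟨m + T, ?_, z - (m + T), ?_, by abel⟩
  · refine ⟨fun i : {i // i ∈ F} => u i, ?_, ?_⟩
    · rw [Metric.mem_closedBall, dist_zero_right]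
      refine (pi_norm_le_iff_of_nonneg (by positivity)).mpr fun i => ?_
      calc ‖u (i : ℕ)‖ ≤ ‖u‖ :=
            lp.norm_apply_le_norm (zero_lt_one.trans_le hp1).ne' u i
        _ ≤ 3 * ‖v‖ := hu3
    · rw [hφdef]
      dsimp only
      congr 1
      rw [hTdef, ← Finset.sum_attach F (fun i => lp.single p i (u i))]
      apply Finset.sum_congr rfl
      intro i _
      rw [← lp.single_smul, smul_eq_mul, mul_one]
  · rw [Metric.mem_closedBall, dist_zero_right]
    have hz' : z - (m + T) = u - T := by rw [hudef]; abel
    rw [hz']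
    exact hwle
end

section
/- With the notation of the previous statement, also define V : Y → X by Vy = Σ_i g_i(y) x_i, where (g_i) is a continuous partition of unity subordinate to (B_Y(y_i,λ)). Then with C = (1 + K + 2K²)λ one has ‖VUx − x‖ ≤ C for all x ∈ X and ‖UVy − y‖ ≤ C for all y ∈ Y. -/
lemma net_key {I : Type*} {F : Type*} [NormedAddCommGroup F] [NormedSpace ℝ F]
    (h : I → ℝ) (z : I → F) (c : F) (hfin : (Function.support h).Finite)
    (hsum : ∑ᶠ j, h j = 1) (hnn : ∀ j, 0 ≤ h j) (M : ℝ)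
    (hM : ∀ j, h j ≠ 0 → ‖z j - c‖ ≤ M) :
    ‖(∑ᶠ j, h j • z j) - c‖ ≤ M := by
  classical
  set s := hfin.toFinset with hs
  have h1 : ∑ᶠ j, h j = ∑ j ∈ s, h j :=
    finsum_eq_finset_sum_of_support_subset _ (by simp [hs])
  have h2 : ∑ᶠ j, h j • z j = ∑ j ∈ s, h j • z j := by
    apply finsum_eq_finset_sum_of_support_subset
    intro j hj
    simp only [Function.mem_support] at hj
    have : h j ≠ 0 := by intro h0; simp [h0] at hj
    simp [hs, this]
  rw [h2]
  have hc : c = ∑ j ∈ s, h j • c := by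
    rw [← Finset.sum_smul, ← h1, hsum, one_smul]
  calc ‖(∑ j ∈ s, h j • z j) - c‖ = ‖∑ j ∈ s, h j • (z j - c)‖ := by
        rw [hc]; rw [← Finset.sum_sub_distrib]
        congr 1; apply Finset.sum_congr rfl; intro j _; rw [smul_sub]
        rw [← hc]
    _ ≤ ∑ j ∈ s, ‖h j • (z j - c)‖ := norm_sum_le _ _
    _ ≤ ∑ j ∈ s, h j * M := by
        apply Finset.sum_le_sum
        intro j hj
        have hj0 : h j ≠ 0 := by simpa [hs] using hj
        rw [norm_smul, Real.norm_eq_abs, abs_of_nonneg (hnn j)]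
        exact mul_le_mul_of_nonneg_left (hM j hj0) (hnn j)
    _ = M := by rw [← Finset.sum_mul, ← h1, hsum, one_mul]

/-- With `U x = ∑ f j (x) • y j` and `V y = ∑ g j (y) • x j` built from continuous
partitions of unity subordinate to the balls of radius `λ` around `K`-Lipschitz
equivalent `(1, λ)`-nets `(x i)` of `X` and `(y i)` of `Y`, one has, with
`C = (1 + K + 2K²) λ`, the estimates `‖V (U x) - x‖ ≤ C` and `‖U (V y) - y‖ ≤ C`. -/
theorem net_maps_almost_inverse
    {X Y : Type*} [NormedAddCommGroup X] [NormedSpace ℝ X] [CompleteSpace X]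
    [NormedAddCommGroup Y] [NormedSpace ℝ Y] [CompleteSpace Y]
    {I : Type*} (xi : I → X) (yi : I → Y) (K lam : ℝ) (hK : 1 ≤ K) (hlam : 1 < lam)
    -- `(x i)` is a `(1, λ)`-net in `X`:
    (hxsep : ∀ i j, i ≠ j → 1 ≤ ‖xi i - xi j‖)
    (hxdense : ∀ x : X, ∃ i, ‖x - xi i‖ < lam)
    -- `(y i)` is a `(1, λ)`-net in `Y`:
    (hysep : ∀ i j, i ≠ j → 1 ≤ ‖yi i - yi j‖)
    (hydense : ∀ y : Y, ∃ i, ‖y - yi i‖ < lam)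
    -- the nets are `K`-Lipschitz equivalent:
    (hnet : ∀ i j, K⁻¹ * ‖xi i - xi j‖ ≤ ‖yi i - yi j‖ ∧ ‖yi i - yi j‖ ≤ K * ‖xi i - xi j‖)
    -- `(f i)` is a continuous partition of unity subordinate to `(B(x i, λ))`:
    (f : I → X → ℝ) (hfcont : ∀ i, Continuous (f i))
    (hfnonneg : ∀ i x, 0 ≤ f i x)
    (hfin : ∀ x : X, (Function.support fun i => f i x).Finite)
    (hfsum : ∀ x : X, ∑ᶠ i, f i x = 1)
    (hfsupp : ∀ i x, f i x ≠ 0 → ‖x - xi i‖ < lam)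
    -- `(g i)` is a continuous partition of unity subordinate to `(B(y i, λ))`:
    (g : I → Y → ℝ) (hgcont : ∀ i, Continuous (g i))
    (hgnonneg : ∀ i y, 0 ≤ g i y)
    (hgfin : ∀ y : Y, (Function.support fun i => g i y).Finite)
    (hgsum : ∀ y : Y, ∑ᶠ i, g i y = 1)
    (hgsupp : ∀ i y, g i y ≠ 0 → ‖y - yi i‖ < lam)
    -- the maps `U` and `V`:
    (U : X → Y) (hU : ∀ x, U x = ∑ᶠ j, f j x • yi j)
    (V : Y → X) (hV : ∀ y, V y = ∑ᶠ j, g j y • xi j) :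
    (∀ x : X, ‖V (U x) - x‖ ≤ (1 + K + 2 * K ^ 2) * lam) ∧
      (∀ y : Y, ‖U (V y) - y‖ ≤ (1 + K + 2 * K ^ 2) * lam) := by
  have hlam0 : (0:ℝ) ≤ lam := le_of_lt (lt_trans one_pos hlam)
  have hK0 : (0:ℝ) ≤ K := le_trans zero_le_one hK
  -- U estimate: ‖x - xi i‖ < lam → ‖U x - yi i‖ ≤ 2 K lam
  have hUest : ∀ (x : X) (i : I), ‖x - xi i‖ < lam → ‖U x - yi i‖ ≤ 2 * K * lam := by
    intro x i hxi
    rw [hU]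
    apply net_key (fun j => f j x) yi (yi i) (hfin x) (hfsum x) (fun j => hfnonneg j x)
    intro j hj
    have hxj := hfsupp j x hj
    have hx2 : ‖xi j - xi i‖ ≤ 2 * lam := by
      have := norm_sub_le_of_le (le_of_lt hxj) (le_of_lt hxi)
      calc ‖xi j - xi i‖ = ‖(x - xi i) - (x - xi j)‖ := by abel_nf
        _ ≤ ‖x - xi i‖ + ‖x - xi j‖ := norm_sub_le _ _
        _ ≤ lam + lam := by linarith
        _ = 2 * lam := by ring
    calc ‖yi j - yi i‖ ≤ K * ‖xi j - xi i‖ := (hnet j i).2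
      _ ≤ K * (2 * lam) := mul_le_mul_of_nonneg_left hx2 hK0
      _ = 2 * K * lam := by ring
  have hVest : ∀ (y : Y) (i : I), ‖y - yi i‖ < lam → ‖V y - xi i‖ ≤ 2 * K * lam := by
    intro y i hyi
    rw [hV]
    apply net_key (fun j => g j y) xi (xi i) (hgfin y) (hgsum y) (fun j => hgnonneg j y)
    intro j hj
    have hyj := hgsupp j y hj
    have hy2 : ‖yi j - yi i‖ ≤ 2 * lam := by
      calc ‖yi j - yi i‖ = ‖(y - yi i) - (y - yi j)‖ := by abel_nf
        _ ≤ ‖y - yi i‖ + ‖y - yi j‖ := norm_sub_le _ _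
        _ ≤ lam + lam := by linarith
        _ = 2 * lam := by ring
    have h1 := (hnet j i).1
    calc ‖xi j - xi i‖ = K * (K⁻¹ * ‖xi j - xi i‖) := by
          field_simp
      _ ≤ K * ‖yi j - yi i‖ := mul_le_mul_of_nonneg_left h1 hK0
      _ ≤ K * (2 * lam) := mul_le_mul_of_nonneg_left hy2 hK0
      _ = 2 * K * lam := by ring
  constructor
  · intro x
    obtain ⟨i, hi⟩ := hxdense x
    have h1 : ‖U x - yi i‖ ≤ 2 * K * lam := hUest x i hi
    -- V (U x) - xi i bound: for j in support of g at U x, ‖U x - yi j‖ < lam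
    have h2 : ‖V (U x) - xi i‖ ≤ K * (2 * K * lam + lam) := by
      rw [hV]
      apply net_key (fun j => g j (U x)) xi (xi i) (hgfin _) (hgsum _)
        (fun j => hgnonneg j _)
      intro j hj
      have hyj := hgsupp j (U x) hj
      have hy : ‖yi j - yi i‖ ≤ 2 * K * lam + lam := by
        calc ‖yi j - yi i‖ = ‖(U x - yi i) - (U x - yi j)‖ := by abel_nf
          _ ≤ ‖U x - yi i‖ + ‖U x - yi j‖ := norm_sub_le _ _
          _ ≤ 2 * K * lam + lam := by linarith
      have hne := (hnet j i).1
      calc ‖xi j - xi i‖ = K * (K⁻¹ * ‖xi j - xi i‖) := by field_simp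
        _ ≤ K * ‖yi j - yi i‖ := mul_le_mul_of_nonneg_left hne hK0
        _ ≤ K * (2 * K * lam + lam) := mul_le_mul_of_nonneg_left hy hK0
    calc ‖V (U x) - x‖ = ‖(V (U x) - xi i) - (x - xi i)‖ := by abel_nf
      _ ≤ ‖V (U x) - xi i‖ + ‖x - xi i‖ := norm_sub_le _ _
      _ ≤ K * (2 * K * lam + lam) + lam := by linarith
      _ ≤ (1 + K + 2 * K ^ 2) * lam := by nlinarith
  · intro y
    obtain ⟨i, hi⟩ := hydense y
    have h1 : ‖V y - xi i‖ ≤ 2 * K * lam := hVest y i hi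
    have h2 : ‖U (V y) - yi i‖ ≤ K * (2 * K * lam + lam) := by
      rw [hU]
      apply net_key (fun j => f j (V y)) yi (yi i) (hfin _) (hfsum _)
        (fun j => hfnonneg j _)
      intro j hj
      have hxj := hfsupp j (V y) hj
      have hx : ‖xi j - xi i‖ ≤ 2 * K * lam + lam := by
        calc ‖xi j - xi i‖ = ‖(V y - xi i) - (V y - xi j)‖ := by abel_nf
          _ ≤ ‖V y - xi i‖ + ‖V y - xi j‖ := norm_sub_le _ _
          _ ≤ 2 * K * lam + lam := by linarith
      calc ‖yi j - yi i‖ ≤ K * ‖xi j - xi i‖ := (hnet j i).2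
        _ ≤ K * (2 * K * lam + lam) := mul_le_mul_of_nonneg_left hx hK0
    calc ‖U (V y) - y‖ = ‖(U (V y) - yi i) - (y - yi i)‖ := by abel_nf
      _ ≤ ‖U (V y) - yi i‖ + ‖y - yi i‖ := norm_sub_le _ _
      _ ≤ K * (2 * K * lam + lam) + lam := by linarith
      _ ≤ (1 + K + 2 * K ^ 2) * lam := by nlinarith
end

section
/- Let X be a normed space, M a metric space and f : X → M a coarse Lipschitz map with Lip_∞(f) > 0. Then for any t, ε > 0 and any 0 < δ < 1 there exist x, y ∈ X with ‖x − y‖ > t such that f(Mid(x, y, δ)) ⊆ Mid(f(x), f(y), (1+ε)δ). -/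
open scoped ENNReal

/-- `Lip_s (f) = sup { d(f x, f y) / ‖x - y‖ : ‖x - y‖ ≥ s }`. -/
noncomputable def lipS {X M : Type*} [NormedAddCommGroup X] [MetricSpace M]
    (f : X → M) (s : ℝ) : ℝ≥0∞ :=
  ⨆ (p : X × X) (_ : s ≤ ‖p.1 - p.2‖), ENNReal.ofReal (dist (f p.1) (f p.2) / ‖p.1 - p.2‖)

/-- `Lip_∞ (f) = inf_{s > 0} Lip_s (f)`. -/
noncomputable def lipInf {X M : Type*} [NormedAddCommGroup X] [MetricSpace M]
    (f : X → M) : ℝ≥0∞ :=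
  ⨅ (s : ℝ) (_ : 0 < s), lipS f s

set_option maxHeartbeats 1000000 in
/-- The approximate midpoint principle: if `f : X → M` is coarse Lipschitz with
`Lip_∞ (f) > 0`, then for any `t, ε > 0` and `0 < δ < 1` there are `x, y` with
`‖x - y‖ > t` and `f (Mid (x, y, δ)) ⊆ Mid (f x, f y, (1+ε) δ)`. -/
theorem approximate_midpoint_principle
    {X M : Type*} [NormedAddCommGroup X] [NormedSpace ℝ X] [MetricSpace M]
    (f : X → M) (hcl : lipInf f < ∞) (hpos : 0 < lipInf f)
    (t ε δ : ℝ) (ht : 0 < t) (hε : 0 < ε) (hδ₀ : 0 < δ) (hδ₁ : δ < 1) :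
    ∃ x y : X, t < ‖x - y‖ ∧
      f '' Mid x y δ ⊆ Mid (f x) (f y) ((1 + ε) * δ) := by
  obtain ⟨L, hLdef⟩ : ∃ L : ℝ, L = (lipInf f).toReal := ⟨_, rfl⟩
  have hL : 0 < L := hLdef ▸ ENNReal.toReal_pos hpos.ne' hcl.ne
  have hLof : ENNReal.ofReal L = lipInf f := hLdef ▸ ENNReal.ofReal_toReal hcl.ne
  obtain ⟨ν, hνdef⟩ : ∃ ν : ℝ, ν = ε * δ / (2 + 2 * δ + ε * δ) := ⟨_, rfl⟩
  have hden : 0 < 2 + 2 * δ + ε * δ := by nlinarith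
  have hν0 : 0 < ν := by rw [hνdef]; positivity
  have hν1 : ν < 1 := by rw [hνdef, div_lt_one hden]; nlinarith
  have hid : (1 - ν) * (1 + (1 + ε) * δ) = (1 + ν) * (1 + δ) := by
    rw [hνdef, one_sub_div hden.ne', one_add_div hden.ne', div_mul_eq_mul_div, div_mul_eq_mul_div,
      div_left_inj' hden.ne']; ring
  -- Step 1: choose `s > 0` with `lipS f s < (1+ν) L`.
  have h1 : lipInf f < ENNReal.ofReal ((1 + ν) * L) := by
    rw [← hLof]
    exact (ENNReal.ofReal_lt_ofReal_iff (by positivity)).mpr (by nlinarith)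
  rw [lipInf] at h1
  simp only [iInf_lt_iff] at h1
  obtain ⟨s, hs, hsL⟩ := h1
  -- Key upper bound for pairs at distance at least `s`.
  have key : ∀ a b : X, s ≤ ‖a - b‖ → dist (f a) (f b) ≤ (1 + ν) * L * ‖a - b‖ := by
    intro a b hab
    have hn : 0 < ‖a - b‖ := lt_of_lt_of_le hs hab
    have h2 : ENNReal.ofReal (dist (f a) (f b) / ‖a - b‖) ≤ lipS f s :=
      le_iSup₂ (f := fun (p : X × X) (_ : s ≤ ‖p.1 - p.2‖) =>
        ENNReal.ofReal (dist (f p.1) (f p.2) / ‖p.1 - p.2‖)) (a, b) hab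
    have h4 : dist (f a) (f b) / ‖a - b‖ < (1 + ν) * L :=
      (ENNReal.ofReal_lt_ofReal_iff (by positivity)).mp (h2.trans_lt hsL)
    have h5 := (div_lt_iff₀ hn).mp h4
    nlinarith
  -- Step 2: find a pair far apart with almost maximal expansion.
  obtain ⟨r, hrdef⟩ : ∃ r : ℝ, r = max t (2 * s / (1 - δ)) + 1 := ⟨_, rfl⟩
  have hr0 : 0 < r := by
    have := le_max_left t (2 * s / (1 - δ)); linarith
  have hLr : ENNReal.ofReal ((1 - ν) * L) < lipS f r := by
    calc ENNReal.ofReal ((1 - ν) * L) < ENNReal.ofReal L := by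
          apply (ENNReal.ofReal_lt_ofReal_iff hL).mpr; nlinarith
      _ = lipInf f := hLof
      _ ≤ lipS f r := iInf₂_le r hr0
  rw [lipS, lt_iSup_iff] at hLr
  obtain ⟨p, hp⟩ := hLr
  rw [lt_iSup_iff] at hp
  obtain ⟨hpr, hp⟩ := hp
  have hn : 0 < ‖p.1 - p.2‖ := lt_of_lt_of_le hr0 hpr
  have hdlow : (1 - ν) * L * ‖p.1 - p.2‖ < dist (f p.1) (f p.2) := by
    have h4 : (1 - ν) * L < dist (f p.1) (f p.2) / ‖p.1 - p.2‖ :=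
      (ENNReal.ofReal_lt_ofReal_iff_of_nonneg (by nlinarith)).mp hp
    exact (lt_div_iff₀ hn).mp h4
  refine ⟨p.1, p.2, ?_, ?_⟩
  · have := le_max_left t (2 * s / (1 - δ)); linarith
  · rintro _ ⟨z, hz, rfl⟩
    simp only [Mid, Set.mem_setOf_eq, max_le_iff] at hz ⊢
    obtain ⟨h1, h2⟩ := hz
    have hD : dist p.1 p.2 = ‖p.1 - p.2‖ := dist_eq_norm _ _
    have htri1 : dist p.1 p.2 ≤ dist p.1 z + dist p.2 z := by
      calc dist p.1 p.2 ≤ dist p.1 z + dist z p.2 := dist_triangle _ _ _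
        _ = dist p.1 z + dist p.2 z := by rw [dist_comm z p.2]
    have h2s : 2 * s ≤ (1 - δ) * r := by
      have hmax : 2 * s / (1 - δ) ≤ r := by
        have := le_max_right t (2 * s / (1 - δ)); linarith
      have hc : 2 * s / (1 - δ) * (1 - δ) = 2 * s :=
        div_mul_cancel₀ _ (by linarith : (1 : ℝ) - δ ≠ 0)
      nlinarith [mul_le_mul_of_nonneg_left hmax (by linarith : (0:ℝ) ≤ 1 - δ)]
    have hrD : r ≤ dist p.1 p.2 := by rw [hD]; exact hpr
    have hfac : 0 ≤ (1 - δ) * (dist p.1 p.2 - r) :=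
      mul_nonneg (by linarith) (by linarith)
    have hsz1 : s ≤ dist p.1 z := by nlinarith
    have hsz2 : s ≤ dist p.2 z := by nlinarith
    have hLν : 0 < (1 + ν) * L := by positivity
    have hk1 : dist (f p.1) (f z) ≤ (1 + ν) * L * dist p.1 z := by
      have h := key p.1 z (by rw [← dist_eq_norm]; exact hsz1)
      rwa [← dist_eq_norm] at h
    have hk2 : dist (f p.2) (f z) ≤ (1 + ν) * L * dist p.2 z := by
      have h := key p.2 z (by rw [← dist_eq_norm]; exact hsz2)
      rwa [← dist_eq_norm] at h
    have hDlow : (1 - ν) * L * dist p.1 p.2 < dist (f p.1) (f p.2) := by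
      rw [hD]; exact hdlow
    have e1 : (1 + ν) * L * ((1 + δ) * dist p.1 p.2 / 2) =
        ((1 + (1 + ε) * δ) / 2) * ((1 - ν) * L * dist p.1 p.2) := by
      linear_combination (-(L * dist p.1 p.2 / 2)) * hid
    have step : (1 + ν) * L * ((1 + δ) * dist p.1 p.2 / 2) ≤
        (1 + (1 + ε) * δ) * dist (f p.1) (f p.2) / 2 := by
      rw [e1]
      have hcoef : 0 ≤ (1 + (1 + ε) * δ) / 2 := by positivity
      linarith [mul_le_mul_of_nonneg_left hDlow.le hcoef]
    constructor
    · linarith [hk1, mul_le_mul_of_nonneg_left h1 hLν.le, step]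
    · linarith [hk2, mul_le_mul_of_nonneg_left h2 hLν.le, step]
end

section
/- Let X be a Banach space and Q : Y → X a quotient (surjective bounded linear) map. Suppose for some 0 < λ < 1 there is a uniformly continuous map φ : S_X → Y with ‖Q(φ(x)) − x‖ ≤ λ for all x ∈ S_X. Then there exists a uniformly continuous map f : B_X → Y with Q(f(x)) = x for all x ∈ B_X. -/
open Metric

set_option linter.unusedSectionVars false
set_option linter.unusedTactic false
set_option linter.unnecessarySimpa false

section Aux


lemma aux_normalize_sub {X : Type*} [NormedAddCommGroup X] [NormedSpace ℝ X]
    (x y : X) (hx : x ≠ 0) (hy : y ≠ 0) :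
    ‖‖x‖⁻¹ • x - ‖y‖⁻¹ • y‖ ≤ 2 * ‖x - y‖ / ‖x‖ := by
  have hax : (0:ℝ) < ‖x‖ := norm_pos_iff.2 hx
  have hay : (0:ℝ) < ‖y‖ := norm_pos_iff.2 hy
  have hdecomp : ‖x‖⁻¹ • x - ‖y‖⁻¹ • y = ‖x‖⁻¹ • (x - y) + (‖x‖⁻¹ - ‖y‖⁻¹) • y := by
    rw [smul_sub, sub_smul]; abel
  rw [hdecomp]
  have h1 : ‖‖x‖⁻¹ • (x - y)‖ = ‖x - y‖ / ‖x‖ := by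
    rw [norm_smul, norm_inv, norm_norm]; ring
  have h2 : ‖(‖x‖⁻¹ - ‖y‖⁻¹) • y‖ ≤ ‖x - y‖ / ‖x‖ := by
    rw [norm_smul, Real.norm_eq_abs]
    have heq : ‖x‖⁻¹ - ‖y‖⁻¹ = (‖y‖ - ‖x‖) / (‖x‖ * ‖y‖) := by
      field_simp
    have : |‖x‖⁻¹ - ‖y‖⁻¹| = |‖y‖ - ‖x‖| / (‖x‖ * ‖y‖) := by
      rw [heq, abs_div, abs_of_pos (mul_pos hax hay)]
    rw [this]
    have hb : |‖y‖ - ‖x‖| ≤ ‖x - y‖ := by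
      rw [abs_sub_comm]; exact abs_norm_sub_norm_le x y
    calc |‖y‖ - ‖x‖| / (‖x‖ * ‖y‖) * ‖y‖ = |‖y‖ - ‖x‖| / ‖x‖ := by field_simp
      _ ≤ ‖x - y‖ / ‖x‖ := by gcongr
  calc ‖‖x‖⁻¹ • (x - y) + (‖x‖⁻¹ - ‖y‖⁻¹) • y‖
      ≤ ‖‖x‖⁻¹ • (x - y)‖ + ‖(‖x‖⁻¹ - ‖y‖⁻¹) • y‖ := norm_add_le _ _
    _ ≤ ‖x - y‖ / ‖x‖ + ‖x - y‖ / ‖x‖ := by rw [h1]; gcongr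
    _ = 2 * ‖x - y‖ / ‖x‖ := by ring



section Bounded
variable {X Y : Type*} [NormedAddCommGroup X] [NormedSpace ℝ X]
  [NormedAddCommGroup Y] [NormedSpace ℝ Y]

lemma chain_bound (φ : sphere (0:X) 1 → Y) {δ : ℝ}
    (hδφ : ∀ a b : sphere (0:X) 1, dist a b < δ → dist (φ a) (φ b) < 1)
    (q : ℕ → sphere (0:X) 1) (m : ℕ) (hq : ∀ k < m, dist (q k) (q (k+1)) < δ) :
    dist (φ (q 0)) (φ (q m)) ≤ m := by
  induction m with
  | zero => simp
  | succ m ih =>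
    have h1 := ih (fun k hk => hq k (Nat.lt_succ_of_lt hk))
    have h2 := hδφ _ _ (hq m (Nat.lt_succ_self m))
    have h3 := dist_triangle (φ (q 0)) (φ (q m)) (φ (q (m+1)))
    push_cast
    push_cast at h1
    linarith

lemma segment_bound (φ : sphere (0:X) 1 → Y) {δ : ℝ}
    (hδφ : ∀ a b : sphere (0:X) 1, dist a b < δ → dist (φ a) (φ b) < 1)
    {n : ℕ} (hn : (4:ℝ)/n < δ) (hn0 : 0 < n)
    (u v : sphere (0:X) 1) (huv : ‖(u:X) - v‖ ≤ 1) :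
    dist (φ u) (φ v) ≤ n := by
  have hu1 : ‖(u:X)‖ = 1 := mem_sphere_zero_iff_norm.mp u.2
  have hv1 : ‖(v:X)‖ = 1 := mem_sphere_zero_iff_norm.mp v.2
  have hnR : (0:ℝ) < n := by exact_mod_cast hn0
  set t : ℕ → ℝ := fun k => ((min k n : ℕ) : ℝ) / n with ht
  set c : ℕ → X := fun k => (u:X) + t k • ((v:X) - u) with hc
  have ht0 : ∀ k, 0 ≤ t k := fun k => by positivity
  have ht1 : ∀ k, t k ≤ 1 := by
    intro k
    rw [ht]
    rw [div_le_one hnR]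
    exact_mod_cast Nat.min_le_right k n
  have hvu : ‖(v:X) - u‖ ≤ 1 := by rw [norm_sub_rev]; exact huv
  have hclow : ∀ k, (1:ℝ)/2 ≤ ‖c k‖ := by
    intro k
    rcases le_total (t k) (1/2) with h | h
    · have h4 : ‖(u:X)‖ - ‖c k‖ ≤ ‖(u:X) - c k‖ := norm_sub_norm_le _ _
      have h5 : (u:X) - c k = -(t k • ((v:X) - u)) := by rw [hc]; module
      rw [h5, norm_neg, norm_smul, Real.norm_eq_abs, abs_of_nonneg (ht0 k)] at h4
      nlinarith [norm_nonneg ((v:X) - u), ht0 k]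
    · have h4 : ‖(v:X)‖ - ‖c k‖ ≤ ‖(v:X) - c k‖ := norm_sub_norm_le _ _
      have h5 : (v:X) - c k = (1 - t k) • ((v:X) - u) := by
        rw [hc, sub_smul, one_smul]; module
      have h6 : 0 ≤ 1 - t k := by linarith [ht1 k]
      rw [h5, norm_smul, Real.norm_eq_abs, abs_of_nonneg h6] at h4
      nlinarith [norm_nonneg ((v:X) - u)]
  have hcne : ∀ k, c k ≠ 0 := by
    intro k h
    have := hclow k
    rw [h, norm_zero] at this
    linarith
  have hcnorm : ∀ k, (0:ℝ) < ‖c k‖ := fun k => norm_pos_iff.2 (hcne k)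
  set q : ℕ → sphere (0:X) 1 := fun k =>
    ⟨‖c k‖⁻¹ • c k, by
      rw [mem_sphere_zero_iff_norm, norm_smul, norm_inv, norm_norm,
        inv_mul_cancel₀ (hcnorm k).ne']⟩ with hqdef
  have hstep : ∀ k < n, dist (q k) (q (k+1)) < δ := by
    intro k hk
    have hdiff : c k - c (k+1) = (t k - t (k+1)) • ((v:X) - u) := by
      rw [hc, sub_smul]; module
    have htk : t (k+1) - t k = 1/n := by
      have h1 : min k n = k := min_eq_left hk.le
      have h2 : min (k+1) n = k+1 := min_eq_left hk
      show ((min (k+1) n : ℕ) : ℝ)/n - ((min k n : ℕ) : ℝ)/n = 1/n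
      rw [h1, h2]
      push_cast
      field_simp
      ring
    have hnd : ‖c k - c (k+1)‖ ≤ 1/n := by
      rw [hdiff, norm_smul, Real.norm_eq_abs]
      have : |t k - t (k+1)| = 1/n := by rw [abs_sub_comm, htk]; exact abs_of_pos (by positivity)
      rw [this]
      calc 1/(n:ℝ) * ‖(v:X) - u‖ ≤ 1/n * 1 := by gcongr
        _ = 1/n := mul_one _
    have hkey : dist (q k) (q (k+1)) ≤ 2 * ‖c k - c (k+1)‖ / ‖c k‖ := by
      rw [Subtype.dist_eq, dist_eq_norm]
      exact aux_normalize_sub _ _ (hcne k) (hcne (k+1))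
    have : 2 * ‖c k - c (k+1)‖ / ‖c k‖ ≤ (2 * (1/n)) / (1/2) := by
      apply div_le_div₀ (by positivity) (by linarith) (by norm_num) (hclow k)
    have h42 : (2 * (1/(n:ℝ))) / (1/2) = 4/n := by field_simp; ring
    linarith
  have hq0 : q 0 = u := by
    apply Subtype.ext
    show ‖c 0‖⁻¹ • c 0 = (u:X)
    have : c 0 = (u:X) := by
      rw [hc, ht]; simp
    rw [this, hu1]
    simp
  have hqn : q n = v := by
    apply Subtype.ext
    show ‖c n‖⁻¹ • c n = (v:X)
    have : c n = (v:X) := by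
      rw [hc, ht]
      simp [hnR.ne']
    rw [this, hv1]
    simp
  have := chain_bound φ hδφ q n hstep
  rwa [hq0, hqn] at this

end Bounded



section Bounded2
variable {X Y : Type*} [NormedAddCommGroup X] [NormedSpace ℝ X]
  [NormedAddCommGroup Y] [NormedSpace ℝ Y]

lemma two_step (φ : sphere (0:X) 1 → Y) {δ : ℝ}
    (hδφ : ∀ a b : sphere (0:X) 1, dist a b < δ → dist (φ a) (φ b) < 1)
    {n : ℕ} (hn : (4:ℝ)/n < δ) (hn0 : 0 < n) (u v : sphere (0:X) 1) (huv : 1 ≤ ‖(u:X) + v‖) :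
    dist (φ u) (φ v) ≤ 2 * n := by
  have hu1 : ‖(u:X)‖ = 1 := mem_sphere_zero_iff_norm.mp u.2
  have hv1 : ‖(v:X)‖ = 1 := mem_sphere_zero_iff_norm.mp v.2
  set s : ℝ := ‖(u:X) + v‖ with hs
  have hs1 : 1 ≤ s := huv
  have hs2 : s ≤ 2 := by
    calc s ≤ ‖(u:X)‖ + ‖(v:X)‖ := norm_add_le _ _
      _ = 2 := by rw [hu1, hv1]; norm_num
  have hspos : 0 < s := by linarith
  set w : sphere (0:X) 1 := ⟨s⁻¹ • ((u:X) + v), by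
    rw [mem_sphere_zero_iff_norm, norm_smul, norm_inv, Real.norm_eq_abs,
      abs_of_pos hspos, ← hs, inv_mul_cancel₀ hspos.ne']⟩ with hw
  have hwu : ‖(w:X) - u‖ ≤ 1 := by
    have h1 : (w:X) - u = s⁻¹ • ((v:X) + (1 - s) • (u:X)) := by
      show s⁻¹ • ((u:X) + v) - u = s⁻¹ • ((v:X) + (1 - s) • (u:X))
      rw [show s⁻¹ • ((u:X) + v) - u = s⁻¹ • (((u:X) + v) - s • (u:X)) by
        rw [smul_sub, smul_smul, inv_mul_cancel₀ hspos.ne', one_smul]]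
      congr 1
      rw [sub_smul, one_smul]
      abel
    rw [h1, norm_smul, norm_inv, Real.norm_eq_abs, abs_of_pos hspos]
    have h2 : ‖(v:X) + (1 - s) • (u:X)‖ ≤ s := by
      calc ‖(v:X) + (1 - s) • (u:X)‖ ≤ ‖(v:X)‖ + ‖(1 - s) • (u:X)‖ := norm_add_le _ _
        _ = 1 + |1 - s| := by rw [hv1, norm_smul, Real.norm_eq_abs, hu1, mul_one]
        _ = 1 + (s - 1) := by rw [abs_of_nonpos (by linarith)]; ring
        _ = s := by ring
    calc s⁻¹ * ‖(v:X) + (1 - s) • (u:X)‖ ≤ s⁻¹ * s := by gcongr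
      _ = 1 := inv_mul_cancel₀ hspos.ne'
  have hwv : ‖(w:X) - v‖ ≤ 1 := by
    have h1 : (w:X) - v = s⁻¹ • ((u:X) + (1 - s) • (v:X)) := by
      show s⁻¹ • ((u:X) + v) - v = s⁻¹ • ((u:X) + (1 - s) • (v:X))
      rw [show s⁻¹ • ((u:X) + v) - v = s⁻¹ • (((u:X) + v) - s • (v:X)) by
        rw [smul_sub, smul_smul, inv_mul_cancel₀ hspos.ne', one_smul]]
      congr 1
      rw [sub_smul, one_smul]
      abel
    rw [h1, norm_smul, norm_inv, Real.norm_eq_abs, abs_of_pos hspos]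
    have h2 : ‖(u:X) + (1 - s) • (v:X)‖ ≤ s := by
      calc ‖(u:X) + (1 - s) • (v:X)‖ ≤ ‖(u:X)‖ + ‖(1 - s) • (v:X)‖ := norm_add_le _ _
        _ = 1 + |1 - s| := by rw [hu1, norm_smul, Real.norm_eq_abs, hv1, mul_one]
        _ = 1 + (s - 1) := by rw [abs_of_nonpos (by linarith)]; ring
        _ = s := by ring
    calc s⁻¹ * ‖(u:X) + (1 - s) • (v:X)‖ ≤ s⁻¹ * s := by gcongr
      _ = 1 := inv_mul_cancel₀ hspos.ne'
  have h1 : dist (φ u) (φ w) ≤ n := by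
    apply segment_bound φ hδφ hn hn0
    rw [norm_sub_rev]; exact hwu
  have h2 : dist (φ w) (φ v) ≤ n :=
    segment_bound φ hδφ hn hn0 w v hwv
  calc dist (φ u) (φ v) ≤ dist (φ u) (φ w) + dist (φ w) (φ v) := dist_triangle _ _ _
    _ ≤ 2 * n := by push_cast; linarith

lemma antipodal_step (φ : sphere (0:X) 1 → Y) {δ : ℝ}
    (hδφ : ∀ a b : sphere (0:X) 1, dist a b < δ → dist (φ a) (φ b) < 1)
    {n : ℕ} (hn : (4:ℝ)/n < δ) (hn0 : 0 < n) (hconn : IsPreconnected (sphere (0:X) 1 : Set X))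
    (v : sphere (0:X) 1) :
    dist (φ v) (φ ⟨-(v:X), by simpa using v.2⟩) ≤ 4 * n := by
  have hv1 : ‖(v:X)‖ = 1 := mem_sphere_zero_iff_norm.mp v.2
  set nv : sphere (0:X) 1 := ⟨-(v:X), by simpa using v.2⟩ with hnv
  have hmem : (v:X) ∈ sphere (0:X) 1 := v.2
  have hmem' : (nv:X) ∈ sphere (0:X) 1 := nv.2
  obtain ⟨z, hz, hzeq⟩ := hconn.intermediate_value₂ hmem hmem'
    (f := fun z => ‖z - (v:X)‖) (g := fun z => ‖z + (v:X)‖)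
    (Continuous.continuousOn (by continuity)) (Continuous.continuousOn (by continuity))
    (by simp) (by simp [hnv])
  have hr1 : 1 ≤ ‖z + (v:X)‖ := by
    have h2 : ((2:ℝ)) = ‖(z + (v:X)) - (z - v)‖ := by
      rw [show (z + (v:X)) - (z - v) = (v:X) + v by abel]
      rw [show (v:X) + v = (2:ℝ) • (v:X) by rw [two_smul]]
      rw [norm_smul, hv1]
      norm_num
    have h3 : ‖(z + (v:X)) - (z - v)‖ ≤ ‖z + (v:X)‖ + ‖z - (v:X)‖ := norm_sub_le _ _
    rw [hzeq] at h3
    linarith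
  set zs : sphere (0:X) 1 := ⟨z, hz⟩ with hzs
  have h1 : dist (φ v) (φ zs) ≤ n * 2 := by
    have := two_step φ hδφ hn hn0 v zs (by
      show 1 ≤ ‖(v:X) + z‖
      rwa [add_comm])
    linarith
  have h2 : dist (φ zs) (φ nv) ≤ n * 2 := by
    have := two_step φ hδφ hn hn0 zs nv (by
      show 1 ≤ ‖z + (nv:X)‖
      show 1 ≤ ‖z + -(v:X)‖
      rw [← sub_eq_add_neg, hzeq]
      exact hr1)
    linarith
  calc dist (φ v) (φ nv) ≤ dist (φ v) (φ zs) + dist (φ zs) (φ nv) := dist_triangle _ _ _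
    _ ≤ 4 * n := by linarith

end Bounded2



section D
variable {X Y : Type*} [NormedAddCommGroup X] [NormedSpace ℝ X]
  [NormedAddCommGroup Y] [NormedSpace ℝ Y]

lemma phi_bounded (φ : sphere (0:X) 1 → Y) (hφ : UniformContinuous φ) :
    ∃ M : ℝ, 0 ≤ M ∧ ∀ u, ‖φ u‖ ≤ M := by
  rcases isEmpty_or_nonempty (sphere (0:X) 1 : Set X) with he | hne
  · exact ⟨0, le_refl 0, fun u => (he.false u).elim⟩
  obtain ⟨u₀⟩ := hne
  obtain ⟨δ, hδ0, hδφ⟩ := Metric.uniformContinuous_iff.mp hφ 1 one_pos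
  have hδφ' : ∀ a b : sphere (0:X) 1, dist a b < δ → dist (φ a) (φ b) < 1 :=
    fun a b h => hδφ h
  set n : ℕ := ⌈4/δ⌉₊ + 1 with hndef
  have hn0 : 0 < n := Nat.succ_pos _
  have hnR : (0:ℝ) < n := by exact_mod_cast hn0
  have hn : (4:ℝ)/n < δ := by
    have h1 : (4:ℝ)/δ < n := by
      calc (4:ℝ)/δ ≤ ⌈4/δ⌉₊ := Nat.le_ceil _
        _ < n := by exact_mod_cast Nat.lt_succ_self _
    rw [div_lt_iff₀ hnR]
    rw [div_lt_iff₀ hδ0] at h1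
    linarith
  have hu₀1 : ‖(u₀:X)‖ = 1 := mem_sphere_zero_iff_norm.mp u₀.2
  by_cases hrank : 1 < Module.rank ℝ X
  · have hconn : IsPreconnected (sphere (0:X) 1 : Set X) :=
      isPreconnected_sphere hrank (0:X) 1
    refine ⟨‖φ u₀‖ + 6 * n, by positivity, fun v => ?_⟩
    by_cases h : 1 ≤ ‖(u₀:X) + v‖
    · have h1 := two_step φ hδφ' hn hn0 u₀ v h
      have h2 : ‖φ v‖ ≤ ‖φ u₀‖ + dist (φ u₀) (φ v) := by
        rw [dist_eq_norm]
        calc ‖φ v‖ = ‖φ u₀ - (φ u₀ - φ v)‖ := by rw [sub_sub_cancel]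
          _ ≤ ‖φ u₀‖ + ‖φ u₀ - φ v‖ := norm_sub_le _ _
      nlinarith [Nat.cast_nonneg (α := ℝ) n]
    · push_neg at h
      set nv : sphere (0:X) 1 := ⟨-(v:X), by simpa using v.2⟩ with hnv
      have hv1 : ‖(v:X)‖ = 1 := mem_sphere_zero_iff_norm.mp v.2
      have h3 : 1 ≤ ‖(u₀:X) + nv‖ := by
        show (1:ℝ) ≤ ‖(u₀:X) + -(v:X)‖
        have h4 : ((2:ℝ)) = ‖((u₀:X) + v) + ((u₀:X) + -v)‖ := by
          rw [show ((u₀:X) + v) + ((u₀:X) + -v) = (2:ℝ) • (u₀:X) by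
            rw [two_smul]; abel]
          rw [norm_smul, hu₀1]
          norm_num
        have h5 := norm_add_le ((u₀:X) + v) ((u₀:X) + -v)
        rw [← h4] at h5
        linarith
      have h1 := two_step φ hδφ' hn hn0 u₀ nv h3
      have h2 := antipodal_step φ hδφ' hn hn0 hconn v
      have h6 : ‖φ v‖ ≤ ‖φ u₀‖ + dist (φ u₀) (φ nv) + dist (φ nv) (φ v) := by
        have t1 : dist (φ u₀) (φ v) ≤ dist (φ u₀) (φ nv) + dist (φ nv) (φ v) :=
          dist_triangle _ _ _
        have t2 : ‖φ v‖ ≤ ‖φ u₀‖ + dist (φ u₀) (φ v) := by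
          rw [dist_eq_norm]
          calc ‖φ v‖ = ‖φ u₀ - (φ u₀ - φ v)‖ := by rw [sub_sub_cancel]
            _ ≤ ‖φ u₀‖ + ‖φ u₀ - φ v‖ := norm_sub_le _ _
        linarith
      have h7 : dist (φ nv) (φ v) ≤ 4 * n := by
        rw [dist_comm]; exact h2
      linarith
  · push_neg at hrank
    obtain ⟨v₀, hv₀⟩ := rank_le_one_iff.mp hrank
    set nu₀ : sphere (0:X) 1 := ⟨-(u₀:X), by simpa using u₀.2⟩ with hnu₀
    refine ⟨max ‖φ u₀‖ ‖φ nu₀‖, le_max_of_le_left (norm_nonneg _), fun v => ?_⟩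
    obtain ⟨a, ha⟩ := hv₀ (u₀:X)
    obtain ⟨b, hb⟩ := hv₀ (v:X)
    have hv1 : ‖(v:X)‖ = 1 := mem_sphere_zero_iff_norm.mp v.2
    have ha0 : a ≠ 0 := by
      rintro rfl
      rw [zero_smul] at ha
      rw [← ha, norm_zero] at hu₀1
      norm_num at hu₀1
    have hv : (v:X) = (b/a) • (u₀:X) := by
      rw [← ha, ← hb, smul_smul]
      congr 1
      field_simp
    have habs : |b/a| = 1 := by
      have : ‖(v:X)‖ = |b/a| * ‖(u₀:X)‖ := by
        rw [hv, norm_smul, Real.norm_eq_abs]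
      rw [hv1, hu₀1, mul_one] at this
      linarith
    rcases abs_eq (by norm_num : (0:ℝ) ≤ 1) |>.mp habs with hc | hc
    · have : v = u₀ := by
        apply Subtype.ext
        rw [hv, hc, one_smul]
      rw [this]
      exact le_max_left _ _
    · have : v = nu₀ := by
        apply Subtype.ext
        rw [hv, hc]
        show (-1:ℝ) • (u₀:X) = -(u₀:X)
        rw [neg_one_smul]
      rw [this]
      exact le_max_right _ _

end D



section E
variable {X Y : Type*} [NormedAddCommGroup X] [NormedSpace ℝ X]
  [NormedAddCommGroup Y] [NormedSpace ℝ Y]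

open scoped Classical in
noncomputable def homExt (φ : sphere (0:X) 1 → Y) (x : X) : Y :=
  if hx : x = (0:X) then 0 else
    ‖x‖ • φ ⟨‖x‖⁻¹ • x, by
      rw [mem_sphere_zero_iff_norm, norm_smul, norm_inv, norm_norm,
        inv_mul_cancel₀ (norm_ne_zero_iff.mpr hx)]⟩

lemma homExt_zero (φ : sphere (0:X) 1 → Y) : homExt φ (0:X) = 0 := by
  simp [homExt]

lemma norm_homExt_le (φ : sphere (0:X) 1 → Y) {M : ℝ} (hMb : ∀ u, ‖φ u‖ ≤ M)
    (x : X) : ‖homExt φ x‖ ≤ M * ‖x‖ := by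
  by_cases hx : x = 0
  · simp [hx, homExt_zero]
  · rw [homExt, dif_neg hx, norm_smul, norm_norm, mul_comm]
    exact mul_le_mul_of_nonneg_right (hMb _) (norm_nonneg x)

lemma norm_sub_Q_homExt_le (Q : Y →L[ℝ] X) {lam : ℝ}
    (φ : sphere (0:X) 1 → Y)
    (hφQ : ∀ x : sphere (0:X) 1, ‖Q (φ x) - (x : X)‖ ≤ lam)
    (x : X) : ‖x - Q (homExt φ x)‖ ≤ lam * ‖x‖ := by
  by_cases hx : x = 0
  · subst hx
    simp [homExt_zero]
  · rw [homExt, dif_neg hx]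
    have hxn : (0:ℝ) < ‖x‖ := norm_pos_iff.mpr hx
    set u : sphere (0:X) 1 := ⟨‖x‖⁻¹ • x, by
      rw [mem_sphere_zero_iff_norm, norm_smul, norm_inv, norm_norm,
        inv_mul_cancel₀ hxn.ne']⟩ with hu
    have hxu : x = ‖x‖ • (u : X) := by
      show x = ‖x‖ • (‖x‖⁻¹ • x)
      rw [smul_smul, mul_inv_cancel₀ hxn.ne', one_smul]
    have h1 : x - Q (‖x‖ • φ u) = ‖x‖ • ((u:X) - Q (φ u)) := by
      rw [map_smul, smul_sub]
      nth_rewrite 1 [hxu]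
      rfl
    rw [h1, norm_smul, norm_norm]
    have h2 : ‖(u:X) - Q (φ u)‖ ≤ lam := by
      rw [norm_sub_rev]
      exact hφQ u
    calc ‖x‖ * ‖(u:X) - Q (φ u)‖ ≤ ‖x‖ * lam := by gcongr
      _ = lam * ‖x‖ := mul_comm _ _

lemma homExt_uc_aux (φ : sphere (0:X) 1 → Y) (hφ : UniformContinuous φ)
    {M : ℝ} (hM0 : 0 ≤ M) (hMb : ∀ u, ‖φ u‖ ≤ M) :
    ∀ ε > (0:ℝ), ∃ η > (0:ℝ), ∀ x y : X, ‖x‖ ≤ 1 → ‖y‖ ≤ 1 → ‖y‖ ≤ ‖x‖ →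
      ‖x - y‖ < η → ‖homExt φ x - homExt φ y‖ < ε := by
  intro ε hε
  obtain ⟨δ₁, hδ₁0, hδ₁⟩ := Metric.uniformContinuous_iff.mp hφ (ε/4) (by linarith)
  set r : ℝ := ε / (4 * (M + 1)) with hr
  have hr0 : 0 < r := by positivity
  refine ⟨min (r/2) (δ₁ * r / 2), by positivity, fun x y hx1 hy1 hyx hxy => ?_⟩
  have hη1 : ‖x - y‖ < r/2 := lt_of_lt_of_le hxy (min_le_left _ _)
  have hη2 : ‖x - y‖ < δ₁ * r / 2 := lt_of_lt_of_le hxy (min_le_right _ _)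
  rcases le_or_gt ‖x‖ r with hcase | hcase
  · -- both small
    have hyr : ‖y‖ ≤ r := le_trans hyx hcase
    have b1 : ‖homExt φ x‖ ≤ M * r := le_trans (norm_homExt_le φ hMb x) (by gcongr)
    have b2 : ‖homExt φ y‖ ≤ M * r := le_trans (norm_homExt_le φ hMb y) (by gcongr)
    have : ‖homExt φ x - homExt φ y‖ ≤ M * r + M * r :=
      le_trans (norm_sub_le _ _) (by linarith)
    have hMr : M * r ≤ ε / 4 := by
      rw [hr, mul_div_assoc']
      rw [div_le_div_iff₀ (by positivity) (by norm_num)]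
      nlinarith
    linarith
  · -- x big
    have hxne : x ≠ 0 := norm_pos_iff.mp (lt_trans hr0 hcase)
    have hyn : r / 2 < ‖y‖ := by
      have := norm_sub_norm_le x y
      calc r/2 = r - r/2 := by ring
        _ < ‖x‖ - ‖x - y‖ := by linarith
        _ ≤ ‖y‖ := by linarith [norm_sub_norm_le x y]
    have hyne : y ≠ 0 := norm_pos_iff.mp (lt_trans (by positivity) hyn)
    have hxn : (0:ℝ) < ‖x‖ := norm_pos_iff.mpr hxne
    have hynpos : (0:ℝ) < ‖y‖ := norm_pos_iff.mpr hyne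
    set u : sphere (0:X) 1 := ⟨‖x‖⁻¹ • x, by
      rw [mem_sphere_zero_iff_norm, norm_smul, norm_inv, norm_norm,
        inv_mul_cancel₀ hxn.ne']⟩ with hudef
    set v : sphere (0:X) 1 := ⟨‖y‖⁻¹ • y, by
      rw [mem_sphere_zero_iff_norm, norm_smul, norm_inv, norm_norm,
        inv_mul_cancel₀ hynpos.ne']⟩ with hvdef
    have hexp : homExt φ x - homExt φ y
        = (‖x‖ - ‖y‖) • φ u + ‖y‖ • (φ u - φ v) := by
      rw [homExt, dif_neg hxne, homExt, dif_neg hyne]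
      rw [sub_smul, smul_sub]
      abel
    have hduv : dist u v < δ₁ := by
      rw [Subtype.dist_eq, dist_eq_norm]
      have h3 : ‖‖x‖⁻¹ • x - ‖y‖⁻¹ • y‖ ≤ 2 * ‖x - y‖ / ‖x‖ :=
        aux_normalize_sub x y hxne hyne
      have h4 : 2 * ‖x - y‖ / ‖x‖ ≤ 2 * ‖x - y‖ / r := by gcongr
      have h5 : 2 * ‖x - y‖ / r < δ₁ := by
        rw [div_lt_iff₀ hr0]
        nlinarith
      exact lt_of_le_of_lt h3 (lt_of_le_of_lt h4 h5)
    have hφuv : ‖φ u - φ v‖ < ε/4 := by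
      have := hδ₁ hduv
      rwa [dist_eq_norm] at this
    have habs : |‖x‖ - ‖y‖| ≤ ‖x - y‖ := abs_norm_sub_norm_le x y
    calc ‖homExt φ x - homExt φ y‖
        ≤ ‖(‖x‖ - ‖y‖) • φ u‖ + ‖‖y‖ • (φ u - φ v)‖ := by rw [hexp]; exact norm_add_le _ _
      _ = |‖x‖ - ‖y‖| * ‖φ u‖ + ‖y‖ * ‖φ u - φ v‖ := by
          rw [norm_smul, norm_smul, Real.norm_eq_abs, Real.norm_eq_abs,
            abs_of_pos hynpos]
      _ ≤ ‖x - y‖ * M + 1 * ‖φ u - φ v‖ := by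
          have t1 : |‖x‖ - ‖y‖| * ‖φ u‖ ≤ ‖x - y‖ * M :=
            mul_le_mul habs (hMb u) (norm_nonneg _) (norm_nonneg _)
          have t2 : ‖y‖ * ‖φ u - φ v‖ ≤ 1 * ‖φ u - φ v‖ :=
            mul_le_mul_of_nonneg_right hy1 (norm_nonneg _)
          linarith
      _ < ε := by
          have h7 : ‖x - y‖ * M ≤ (r/2) * M := by
            apply mul_le_mul_of_nonneg_right hη1.le hM0
          have h8 : (r/2) * M ≤ ε / 8 := by
            rw [hr, div_div, div_mul_eq_mul_div,
              div_le_div_iff₀ (by positivity) (by norm_num)]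
            nlinarith
          nlinarith

lemma homExt_uc (φ : sphere (0:X) 1 → Y) (hφ : UniformContinuous φ)
    {M : ℝ} (hM0 : 0 ≤ M) (hMb : ∀ u, ‖φ u‖ ≤ M) :
    ∀ ε > (0:ℝ), ∃ η > (0:ℝ), ∀ x y : X, ‖x‖ ≤ 1 → ‖y‖ ≤ 1 →
      ‖x - y‖ < η → ‖homExt φ x - homExt φ y‖ < ε := by
  intro ε hε
  obtain ⟨η, hη0, hη⟩ := homExt_uc_aux φ hφ hM0 hMb ε hε
  refine ⟨η, hη0, fun x y hx1 hy1 hxy => ?_⟩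
  rcases le_total ‖y‖ ‖x‖ with h | h
  · exact hη x y hx1 hy1 h hxy
  · rw [norm_sub_rev]
    exact hη y x hy1 hx1 h (by rwa [norm_sub_rev])

end E

end Aux

lemma uc_of_tendstoUniformly {α E : Type*} [PseudoMetricSpace α] [PseudoMetricSpace E]
    {F : ℕ → α → E} {f : α → E} (h : TendstoUniformly F f Filter.atTop)
    (hF : ∀ n, UniformContinuous (F n)) : UniformContinuous f := by
  rw [Metric.uniformContinuous_iff]
  intro ε hε
  obtain ⟨N, hN⟩ := (Metric.tendstoUniformly_iff.mp h (ε/3) (by linarith)).exists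
  obtain ⟨δ, hδ0, hδ⟩ := Metric.uniformContinuous_iff.mp (hF N) (ε/3) (by linarith)
  refine ⟨δ, hδ0, fun {a b} hab => ?_⟩
  have h1 := hN a
  have h2 := hN b
  have h3 := hδ hab
  calc dist (f a) (f b)
      ≤ dist (f a) (F N a) + dist (F N a) (F N b) + dist (F N b) (f b) :=
        dist_triangle4 _ _ _ _
    _ < ε := by rw [dist_comm (F N b) (f b)]; linarith

/-- Let `Q : Y → X` be a surjective bounded linear map between Banach spaces. If for
some `0 < λ < 1` there is a uniformly continuous `φ : S_X → Y` with
`‖Q (φ x) - x‖ ≤ λ` on the unit sphere, then there is a uniformly continuous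
selection `f : B_X → Y` of `Q` on the closed unit ball. -/
theorem uniformly_continuous_selection_of_quotient
    {X Y : Type*} [NormedAddCommGroup X] [NormedSpace ℝ X] [CompleteSpace X]
    [NormedAddCommGroup Y] [NormedSpace ℝ Y] [CompleteSpace Y]
    (Q : Y →L[ℝ] X) (hQ : Function.Surjective Q)
    (lam : ℝ) (hlam₀ : 0 < lam) (hlam₁ : lam < 1)
    (φ : Metric.sphere (0 : X) 1 → Y) (hφ : UniformContinuous φ)
    (hφQ : ∀ x : Metric.sphere (0 : X) 1, ‖Q (φ x) - (x : X)‖ ≤ lam) :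
    ∃ f : Metric.closedBall (0 : X) 1 → Y,
      UniformContinuous f ∧ ∀ x : Metric.closedBall (0 : X) 1, Q (f x) = (x : X) := by
  obtain ⟨M, hM0, hMb⟩ := phi_bounded φ hφ
  set ψ : X → Y := homExt φ with hψdef
  set g : X → X := fun x => x - Q (ψ x) with hgdef
  have hg : ∀ x, ‖g x‖ ≤ lam * ‖x‖ := fun x => norm_sub_Q_homExt_le Q φ hφQ x
  have hgball : ∀ x : X, ‖x‖ ≤ 1 → ‖g x‖ ≤ 1 := fun x hx =>
    le_trans (hg x) (by nlinarith)
  have hiter : ∀ (x : X), ‖x‖ ≤ 1 → ∀ n : ℕ, ‖g^[n] x‖ ≤ lam ^ n := by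
    intro x hx n
    induction n with
    | zero => simpa using hx
    | succ n ih =>
      rw [Function.iterate_succ_apply']
      calc ‖g (g^[n] x)‖ ≤ lam * ‖g^[n] x‖ := hg _
        _ ≤ lam * lam ^ n := by
            exact mul_le_mul_of_nonneg_left ih hlam₀.le
        _ = lam ^ (n+1) := by rw [pow_succ]; ring
  have hmem : ∀ x : Metric.closedBall (0:X) 1, ‖(x:X)‖ ≤ 1 :=
    fun x => mem_closedBall_zero_iff.mp x.2
  set f : Metric.closedBall (0:X) 1 → Y := fun x => ∑' n, ψ (g^[n] (x:X)) with hfdef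
  have hterm : ∀ (n : ℕ) (x : Metric.closedBall (0:X) 1),
      ‖ψ (g^[n] (x:X))‖ ≤ M * lam ^ n := by
    intro n x
    calc ‖ψ (g^[n] (x:X))‖ ≤ M * ‖g^[n] (x:X)‖ := norm_homExt_le φ hMb _
      _ ≤ M * lam ^ n := mul_le_mul_of_nonneg_left (hiter _ (hmem x) n) hM0
  have hsumu : Summable (fun n => M * lam ^ n) :=
    (summable_geometric_of_lt_one hlam₀.le hlam₁).mul_left M
  have hsummY : ∀ x : Metric.closedBall (0:X) 1,
      Summable (fun n => ψ (g^[n] (x:X))) := fun x =>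
    Summable.of_norm_bounded hsumu (fun n => hterm n x)
  have hΨ : UniformContinuous (fun x : Metric.closedBall (0:X) 1 => ψ (x:X)) := by
    rw [Metric.uniformContinuous_iff]
    intro ε hε
    obtain ⟨η, hη0, hη⟩ := homExt_uc φ hφ hM0 hMb ε hε
    exact ⟨η, hη0, fun {a b} hab => by
      rw [dist_eq_norm]
      exact hη _ _ (hmem a) (hmem b) (by rwa [Subtype.dist_eq, dist_eq_norm] at hab)⟩
  set G : Metric.closedBall (0:X) 1 → Metric.closedBall (0:X) 1 :=
    fun x => ⟨g (x:X), mem_closedBall_zero_iff.mpr (hgball _ (hmem x))⟩ with hGdef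
  have hGuc : UniformContinuous G := by
    rw [Metric.uniformContinuous_iff]
    intro ε hε
    have hQ1 : (0:ℝ) < ‖Q‖ + 1 := by positivity
    obtain ⟨η, hη0, hη⟩ := homExt_uc φ hφ hM0 hMb (ε/(2*(‖Q‖+1))) (by positivity)
    refine ⟨min η (ε/2), by positivity, fun {a b} hab => ?_⟩
    rw [Subtype.dist_eq, dist_eq_norm] at hab ⊢
    show ‖g ↑a - g ↑b‖ < ε
    have h1 : g ↑a - g ↑b = ((↑a:X) - ↑b) - Q (ψ ↑a - ψ ↑b) := by
      show ((↑a:X) - Q (ψ ↑a)) - ((↑b:X) - Q (ψ ↑b)) = ((↑a:X) - ↑b) - Q (ψ ↑a - ψ ↑b)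
      rw [map_sub]
      abel
    have h2 : ‖ψ ↑a - ψ ↑b‖ < ε/(2*(‖Q‖+1)) :=
      hη _ _ (hmem a) (hmem b) (lt_of_lt_of_le hab (min_le_left _ _))
    have h3 : ‖Q (ψ ↑a - ψ ↑b)‖ ≤ ‖Q‖ * ‖ψ ↑a - ψ ↑b‖ := Q.le_opNorm _
    have h4 : ‖Q‖ * ‖ψ ↑a - ψ ↑b‖ ≤ ‖Q‖ * (ε/(2*(‖Q‖+1))) :=
      mul_le_mul_of_nonneg_left h2.le (norm_nonneg _)
    have h5 : ‖Q‖ * (ε/(2*(‖Q‖+1))) ≤ ε/2 := by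
      rw [mul_div_assoc', div_le_div_iff₀ (by positivity) (by norm_num)]
      nlinarith [norm_nonneg Q]
    have h6 : ‖(↑a:X) - ↑b‖ < ε/2 := lt_of_lt_of_le hab (min_le_right _ _)
    calc ‖g ↑a - g ↑b‖ ≤ ‖(↑a:X) - ↑b‖ + ‖Q (ψ ↑a - ψ ↑b)‖ := by
          rw [h1]; exact norm_sub_le _ _
      _ < ε := by linarith
  have hGiter : ∀ (n : ℕ) (x : Metric.closedBall (0:X) 1),
      ((G^[n] x : Metric.closedBall (0:X) 1) : X) = g^[n] (x:X) := by
    intro n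
    induction n with
    | zero => intro x; simp
    | succ n ih =>
      intro x
      rw [Function.iterate_succ_apply', Function.iterate_succ_apply']
      show g ((G^[n] x : Metric.closedBall (0:X) 1) : X) = g (g^[n] (x:X))
      rw [ih x]
  have hGnuc : ∀ n : ℕ, UniformContinuous (G^[n]) := by
    intro n
    induction n with
    | zero => simpa using uniformContinuous_id
    | succ n ih =>
      rw [Function.iterate_succ]
      exact ih.comp hGuc
  have hFn : ∀ n : ℕ, UniformContinuous
      (fun x : Metric.closedBall (0:X) 1 => ψ (g^[n] (x:X))) := by
    intro n
    have heq : (fun x : Metric.closedBall (0:X) 1 => ψ (g^[n] (x:X)))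
        = (fun x : Metric.closedBall (0:X) 1 => ψ (x:X)) ∘ (G^[n]) := by
      funext x
      simp only [Function.comp_apply, hGiter n x]
    rw [heq]
    exact hΨ.comp (hGnuc n)
  have hSN : ∀ N : ℕ, UniformContinuous
      (fun x : Metric.closedBall (0:X) 1 => ∑ n ∈ Finset.range N, ψ (g^[n] (x:X))) := by
    intro N
    induction N with
    | zero => simpa using uniformContinuous_const
    | succ N ih =>
      have heq : (fun x : Metric.closedBall (0:X) 1 =>
            ∑ n ∈ Finset.range (N+1), ψ (g^[n] (x:X)))
          = fun x : Metric.closedBall (0:X) 1 =>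
            (∑ n ∈ Finset.range N, ψ (g^[n] (x:X))) + ψ (g^[N] (x:X)) := by
        funext x
        rw [Finset.sum_range_succ]
      rw [heq]
      exact ih.add (hFn N)
  have htu : TendstoUniformly
      (fun N (x : Metric.closedBall (0:X) 1) => ∑ n ∈ Finset.range N, ψ (g^[n] (x:X)))
      f Filter.atTop :=
    tendstoUniformly_tsum_nat hsumu (fun n x => hterm n x)
  have hfuc : UniformContinuous f := uc_of_tendstoUniformly htu hSN
  refine ⟨f, hfuc, fun x => ?_⟩
  have hmapQ : Q (f x) = ∑' n, Q (ψ (g^[n] (x:X))) := Q.map_tsum (hsummY x)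
  have hQψ : ∀ y : X, Q (ψ y) = y - g y := by
    intro y
    show Q (ψ y) = y - (y - Q (ψ y))
    rw [sub_sub_cancel]
  have hTel : ∀ n : ℕ, Q (ψ (g^[n] (x:X))) = g^[n] (x:X) - g^[n+1] (x:X) := by
    intro n
    rw [Function.iterate_succ_apply', hQψ]
  have hsum2 : Summable (fun n => g^[n] (x:X) - g^[n+1] (x:X)) := by
    apply Summable.of_norm_bounded (g := fun n => ‖Q‖ * (M * lam ^ n)) (hsumu.mul_left ‖Q‖)
    intro n
    rw [← hTel n]
    calc ‖Q (ψ (g^[n] (x:X)))‖ ≤ ‖Q‖ * ‖ψ (g^[n] (x:X))‖ := Q.le_opNorm _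
      _ ≤ ‖Q‖ * (M * lam ^ n) := mul_le_mul_of_nonneg_left (hterm n x) (norm_nonneg _)
  have hlim : Filter.Tendsto (fun N => g^[N] (x:X)) Filter.atTop (nhds 0) :=
    squeeze_zero_norm (fun n => hiter _ (hmem x) n)
      (tendsto_pow_atTop_nhds_zero_of_lt_one hlam₀.le hlam₁)
  have hpartial : ∀ N : ℕ, ∑ n ∈ Finset.range N, (g^[n] (x:X) - g^[n+1] (x:X))
      = (x:X) - g^[N] (x:X) := by
    intro N
    have h := Finset.sum_range_sub' (fun n => g^[n] (x:X)) N
    simpa using h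
  have htend : Filter.Tendsto
      (fun N => ∑ n ∈ Finset.range N, (g^[n] (x:X) - g^[n+1] (x:X)))
      Filter.atTop (nhds ((x:X))) := by
    have h2 : Filter.Tendsto (fun N => (x:X) - g^[N] (x:X)) Filter.atTop
        (nhds ((x:X) - 0)) := tendsto_const_nhds.sub hlim
    rw [sub_zero] at h2
    simpa only [hpartial] using h2
  have h1 : ∑' n, (g^[n] (x:X) - g^[n+1] (x:X)) = (x:X) :=
    tendsto_nhds_unique hsum2.hasSum.tendsto_sum_nat htend
  rw [hmapQ]
  calc ∑' n, Q (ψ (g^[n] (x:X))) = ∑' n, (g^[n] (x:X) - g^[n+1] (x:X)) := by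
        exact tsum_congr hTel
    _ = (x:X) := h1
end

section
/- Equip G_k(ℕ) (increasing k-tuples of positive integers) with the interlacing graph metric δ, where distinct tuples n, m are adjacent iff m₁ ≤ n₁ ≤ m₂ ≤ n₂ ≤ … ≤ m_k ≤ n_k or n₁ ≤ m₁ ≤ … ≤ n_k ≤ m_k, and δ is the least path metric. Then for every n, m ∈ G_k(ℕ) one has δ(n, m) ≤ k, i.e. G_k(ℕ) has diameter at most k. -/
/-- `G_k(ℕ)`: strictly increasing `k`-tuples of natural numbers. -/
def Gk (k : ℕ) := {n : Fin k → ℕ // StrictMono n}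

/-- `m` interlaces `n` from below: `m₁ ≤ n₁ ≤ m₂ ≤ n₂ ≤ … ≤ m_k ≤ n_k`. -/
def Interlace {k : ℕ} (m n : Gk k) : Prop :=
  (∀ i : Fin k, m.1 i ≤ n.1 i) ∧
  ∀ i : Fin k, ∀ h : (i : ℕ) + 1 < k, n.1 i ≤ m.1 ⟨(i : ℕ) + 1, h⟩

/-- Adjacency in the interlacing graph on `G_k(ℕ)`. -/
def InterlaceAdj {k : ℕ} (m n : Gk k) : Prop :=
  m ≠ n ∧ (Interlace m n ∨ Interlace n m)

/-- Auxiliary: `x` capped shift of `y` by `t`. -/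
def shiftMin {k : ℕ} (x y : Fin k → ℕ) (t : ℕ) : Fin k → ℕ :=
  fun i => if h : (i : ℕ) + t < k then min (x i) (y ⟨(i : ℕ) + t, h⟩) else x i

lemma shiftMin_strictMono {k : ℕ} {x y : Fin k → ℕ} (hx : StrictMono x)
    (hy : StrictMono y) (t : ℕ) : StrictMono (shiftMin x y t) := by
  intro i j hij
  have hij' : (i : ℕ) < j := hij
  unfold shiftMin
  by_cases hj : (j : ℕ) + t < k
  · have hi : (i : ℕ) + t < k := by omega
    rw [dif_pos hi, dif_pos hj]
    have h1 : x i < x j := hx hij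
    have h2 : y ⟨(i : ℕ) + t, hi⟩ < y ⟨(j : ℕ) + t, hj⟩ := hy (Fin.mk_lt_mk.mpr (by omega))
    exact lt_min (lt_of_le_of_lt (min_le_left _ _) h1)
      (lt_of_le_of_lt (min_le_right _ _) h2)
  · by_cases hi : (i : ℕ) + t < k
    · rw [dif_pos hi, dif_neg hj]
      exact lt_of_le_of_lt (min_le_left _ _) (hx hij)
    · rw [dif_neg hi, dif_neg hj]
      exact hx hij

lemma shiftMin_eq_left {k : ℕ} {x y : Fin k → ℕ} {t : ℕ}
    (h : ∀ i : Fin k, ∀ hi : (i : ℕ) + t < k, x i ≤ y ⟨(i : ℕ) + t, hi⟩) :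
    shiftMin x y t = x := by
  funext i
  unfold shiftMin
  by_cases hi : (i : ℕ) + t < k
  · rw [dif_pos hi]; exact min_eq_left (h i hi)
  · rw [dif_neg hi]

lemma shiftMin_zero_eq {k : ℕ} {x y : Fin k → ℕ} (h : ∀ i, y i ≤ x i) :
    shiftMin x y 0 = y := by
  funext i
  unfold shiftMin
  rw [dif_pos (by omega : (i : ℕ) + 0 < k)]
  exact min_eq_right (h i)

lemma shiftMin_large_eq {k : ℕ} {x y : Fin k → ℕ} {t : ℕ} (h : k ≤ t) :
    shiftMin x y t = x := by
  funext i
  unfold shiftMin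
  rw [dif_neg (by omega)]

lemma interlace_shiftMin_step {k : ℕ} {x y : Fin k → ℕ} (hx : StrictMono x)
    (hy : StrictMono y) {s t : ℕ} (hst : t = s + 1) :
    Interlace ⟨shiftMin x y s, shiftMin_strictMono hx hy s⟩
      ⟨shiftMin x y t, shiftMin_strictMono hx hy t⟩ := by
  subst hst
  constructor
  · intro i
    show shiftMin x y s i ≤ shiftMin x y (s + 1) i
    unfold shiftMin
    by_cases h1 : (i : ℕ) + (s + 1) < k
    · have h0 : (i : ℕ) + s < k := by omega
      rw [dif_pos h0, dif_pos h1]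
      exact min_le_min le_rfl (hy.monotone (by simp [Fin.le_def]))
    · by_cases h0 : (i : ℕ) + s < k
      · rw [dif_pos h0, dif_neg h1]
        exact min_le_left _ _
      · rw [dif_neg h0, dif_neg h1]
  · intro i h
    show shiftMin x y (s + 1) i ≤ shiftMin x y s ⟨(i : ℕ) + 1, h⟩
    unfold shiftMin
    by_cases h1 : (i : ℕ) + (s + 1) < k
    · have h2 : ((⟨(i : ℕ) + 1, h⟩ : Fin k) : ℕ) + s < k := by simp; omega
      rw [dif_pos h1, dif_pos h2]
      apply min_le_min
      · exact hx.monotone (by simp [Fin.le_def])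
      · exact le_of_eq (congrArg y (Fin.ext (by simp; omega)))
    · have h2 : ¬ (((⟨(i : ℕ) + 1, h⟩ : Fin k) : ℕ) + s < k) := by simp; omega
      rw [dif_neg h1, dif_neg h2]
      exact hx.monotone (by simp [Fin.le_def])

/-- In the interlacing graph metric (the least path metric) on `G_k(ℕ)`, any two
vertices are at distance at most `k`: any two tuples are joined by a path with at
most `k` edges (stationary steps allowed).  Hence `G_k(ℕ)` has diameter at most `k`. -/
theorem interlacing_graph_diameter_le (k : ℕ) (n m : Gk k) :
    ∃ p : ℕ → Gk k, p 0 = n ∧ p k = m ∧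
      ∀ i < k, p i = p (i + 1) ∨ InterlaceAdj (p i) (p (i + 1)) := by
  classical
  set x : Fin k → ℕ := fun i => max (n.1 i) (m.1 i) with hxdef
  have hx : StrictMono x := fun i j h => max_lt_max (n.2 h) (m.2 h)
  have hex : ∃ t, ∀ i : Fin k, ∀ h : (i : ℕ) + t < k, m.1 i ≤ n.1 ⟨(i : ℕ) + t, h⟩ :=
    ⟨k, fun i h => absurd h (by omega)⟩
  set u := Nat.find hex with hudef
  have hu_le : u ≤ k := Nat.find_le (fun i h => absurd h (by omega))
  have hA : ∀ i : Fin k, ∀ h : (i : ℕ) + u < k, m.1 i ≤ n.1 ⟨(i : ℕ) + u, h⟩ :=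
    Nat.find_spec hex
  -- the key counting fact
  have hB : ∀ i : Fin k, ∀ h : (i : ℕ) + (k - u) < k, n.1 i ≤ m.1 ⟨(i : ℕ) + (k - u), h⟩ := by
    intro i h
    have hu0 : 0 < u := by
      by_contra hc
      have : u = 0 := by omega
      rw [this] at h
      omega
    have hmin : ¬ ∀ i : Fin k, ∀ h : (i : ℕ) + (u - 1) < k,
        m.1 i ≤ n.1 ⟨(i : ℕ) + (u - 1), h⟩ := Nat.find_min hex (by omega)
    push_neg at hmin
    obtain ⟨i₀, h₀, hlt⟩ := hmin
    have h1 : n.1 i ≤ n.1 ⟨(i₀ : ℕ) + (u - 1), h₀⟩ :=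
      n.2.monotone (by simp [Fin.le_def]; omega)
    have h2 : m.1 i₀ ≤ m.1 ⟨(i : ℕ) + (k - u), h⟩ :=
      m.2.monotone (by simp [Fin.le_def]; omega)
    exact le_trans h1 (le_trans (le_of_lt hlt) h2)
  -- the up-phase reaches `x` and the down-phase starts at `x`
  have hxn : ∀ i : Fin k, ∀ hi : (i : ℕ) + u < k, x i ≤ n.1 ⟨(i : ℕ) + u, hi⟩ := by
    intro i hi
    exact max_le (n.2.monotone (by simp [Fin.le_def])) (hA i hi)
  have hxm : ∀ i : Fin k, ∀ hi : (i : ℕ) + (k - u) < k, x i ≤ m.1 ⟨(i : ℕ) + (k - u), hi⟩ := by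
    intro i hi
    exact max_le (hB i hi) (m.2.monotone (by simp [Fin.le_def]))
  have hupx : shiftMin x n.1 u = x := shiftMin_eq_left hxn
  have hdownx : shiftMin x m.1 (k - u) = x := shiftMin_eq_left hxm
  refine ⟨fun t => if t < u then ⟨shiftMin x n.1 t, shiftMin_strictMono hx n.2 t⟩
      else ⟨shiftMin x m.1 (k - t), shiftMin_strictMono hx m.2 (k - t)⟩, ?_, ?_, ?_⟩
  · -- p 0 = n
    beta_reduce
    by_cases h0 : 0 < u
    · erw [if_pos h0]
      exact Subtype.ext (shiftMin_zero_eq (fun i => le_max_left _ _))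
    · erw [if_neg h0]
      have hu0 : u = 0 := by omega
      apply Subtype.ext
      show shiftMin x m.1 (k - 0) = n.1
      rw [shiftMin_large_eq (by omega)]
      funext i
      have := hA i (by omega : (i : ℕ) + u < k)
      have hi : m.1 i ≤ n.1 i := by
        refine le_trans this (le_of_eq (congrArg n.1 (Fin.ext ?_)))
        simp [hu0]
      exact max_eq_left hi
  · -- p k = m
    beta_reduce
    erw [if_neg (by omega : ¬ k < u)]
    apply Subtype.ext
    show shiftMin x m.1 (k - k) = m.1
    rw [Nat.sub_self]
    exact shiftMin_zero_eq (fun i => le_max_right _ _)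
  · -- adjacency
    intro t ht
    by_cases heq : (if t < u then (⟨shiftMin x n.1 t, shiftMin_strictMono hx n.2 t⟩ : Gk k)
        else ⟨shiftMin x m.1 (k - t), shiftMin_strictMono hx m.2 (k - t)⟩) =
        (if t + 1 < u then (⟨shiftMin x n.1 (t + 1), shiftMin_strictMono hx n.2 (t + 1)⟩ : Gk k)
        else ⟨shiftMin x m.1 (k - (t + 1)), shiftMin_strictMono hx m.2 (k - (t + 1))⟩)
    · exact Or.inl heq
    right
    refine ⟨heq, ?_⟩
    beta_reduce
    by_cases h1 : t + 1 < u
    · have h0 : t < u := by omega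
      erw [if_pos h0, if_pos h1]
      exact Or.inl (interlace_shiftMin_step hx n.2 rfl)
    · by_cases h0 : t < u
      · -- t + 1 = u : boundary
        have htu : t + 1 = u := by omega
        erw [if_pos h0, if_neg h1]
        have hsub : (⟨shiftMin x m.1 (k - (t + 1)),
            shiftMin_strictMono hx m.2 (k - (t + 1))⟩ : Gk k) =
            ⟨shiftMin x n.1 (t + 1), shiftMin_strictMono hx n.2 (t + 1)⟩ := by
          apply Subtype.ext
          show shiftMin x m.1 (k - (t + 1)) = shiftMin x n.1 (t + 1)
          rw [htu, hdownx, hupx]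
        rw [hsub]
        exact Or.inl (interlace_shiftMin_step hx n.2 rfl)
      · -- down phase
        erw [if_neg h0, if_neg h1]
        refine Or.inr ?_
        have hkt : k - t = (k - (t + 1)) + 1 := by omega
        have hstep := interlace_shiftMin_step hx m.2 hkt
        exact hstep
end
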